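/- arXiv:0901.1175 — 2 statements merged into one kernel-verified Lean document; each statement's English description precedes it below -/
import Mathlib

section
/- For every n ≥ 2, the map π ↦ π̌ is a bijection from {π ∈ NCL(n) : π̂ = 1_n} onto {α ∈ NC(n) : 1 and 2 belong to the same block of α}. -/
open scoped Classical

/-- The minimum of a finset of naturals (`0` if empty). -/
noncomputable def fmin (A : Finset ℕ) : ℕ := sInf (A : Set ℕ)

/-- The maximum of a finset of naturals (`0` if empty). -/
noncomputable def fmax (A : Finset ℕ) : ℕ := sSup (A : Set ℕ)

/-- `α` is a partition of the finite set `F ⊆ ℕ`. -/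
def IsPartitionOfSet (F : Finset ℕ) (α : Finset (Finset ℕ)) : Prop :=
  (∀ V ∈ α, V.Nonempty) ∧ (∀ V ∈ α, V ⊆ F) ∧ (∀ m ∈ F, ∃ V ∈ α, m ∈ V) ∧
    ∀ V ∈ α, ∀ W ∈ α, V ≠ W → V ∩ W = ∅

/-- `α` is a partition of `{1,…,n}`. -/
def IsPartitionOf (n : ℕ) (α : Finset (Finset ℕ)) : Prop :=
  IsPartitionOfSet (Finset.Icc 1 n) α

/-- Two distinct blocks of the family `π` cross: there are `a < b < c < d` with
`a, c` in one block and `b, d` in a different block. -/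
def IsCrossing (π : Finset (Finset ℕ)) : Prop :=
  ∃ A ∈ π, ∃ B ∈ π, A ≠ B ∧
    ∃ a ∈ A, ∃ b ∈ B, ∃ c ∈ A, ∃ d ∈ B, a < b ∧ b < c ∧ c < d

/-- `α ∈ NC(n)`: a non-crossing partition of `{1,…,n}`. -/
def IsNCPartition (n : ℕ) (α : Finset (Finset ℕ)) : Prop :=
  IsPartitionOf n α ∧ ¬ IsCrossing α

/-- Reverse refinement order `α ≤ β`: every block of `α` is contained in a block of `β`
(equivalently, every block of `β` is a union of blocks of `α`). -/
def Refines (α β : Finset (Finset ℕ)) : Prop := ∀ V ∈ α, ∃ W ∈ β, V ⊆ W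

/-- The partial order `α ≪ β`: `α ≤ β` and for every block `W` of `β` there is a block
`V` of `α` containing both `min W` and `max W`. -/
def LL (α β : Finset (Finset ℕ)) : Prop :=
  Refines α β ∧ ∀ W ∈ β, ∃ V ∈ α, fmin W ∈ V ∧ fmax W ∈ V

/-- A block `V` (of `α`) is `β`-special: some block `W` of `β` has the same min and max. -/
def SpecialBlock (β : Finset (Finset ℕ)) (V : Finset ℕ) : Prop :=
  ∃ W ∈ β, fmin V = fmin W ∧ fmax V = fmax W

/-- `V` is an outer block of `α`: no block of `α` strictly nests around it. -/
def OuterBlock (α : Finset (Finset ℕ)) (V : Finset ℕ) : Prop :=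
  ∀ V' ∈ α, ¬ (fmin V' < fmin V ∧ fmax V < fmax V')

/-- `π` is a linked partition of the finite set `F ⊆ ℕ`. -/
def IsLinkedPartitionOfSet (F : Finset ℕ) (π : Finset (Finset ℕ)) : Prop :=
  (∀ A ∈ π, A.Nonempty) ∧ (∀ A ∈ π, A ⊆ F) ∧ (∀ m ∈ F, ∃ A ∈ π, m ∈ A) ∧
    ∀ A ∈ π, ∀ B ∈ π, A ≠ B →
      A ∩ B = ∅ ∨
        (2 ≤ A.card ∧ 2 ≤ B.card ∧ (A ∩ B).card = 1 ∧ fmin A ≠ fmin B ∧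
          ∀ x ∈ A ∩ B, x = fmin A ∨ x = fmin B)

/-- `π ∈ NCL(F)`: a non-crossing linked partition of the finite set `F`. -/
def IsNCLOfSet (F : Finset ℕ) (π : Finset (Finset ℕ)) : Prop :=
  IsLinkedPartitionOfSet F π ∧ ¬ IsCrossing π

/-- `π ∈ NCL(n)`: a non-crossing linked partition of `{1,…,n}`. -/
def IsNCL (n : ℕ) (π : Finset (Finset ℕ)) : Prop :=
  IsNCLOfSet (Finset.Icc 1 n) π

/-- The number of blocks of `π` containing `m`. -/
noncomputable def coverCount (π : Finset (Finset ℕ)) (m : ℕ) : ℕ :=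
  (π.filter fun A => m ∈ A).card

/-- `m` is singly-covered by `π`: it lies in exactly one block. -/
def SinglyCovered (π : Finset (Finset ℕ)) (m : ℕ) : Prop := coverCount π m = 1

/-- `m` is doubly-covered by `π`: it lies in exactly two blocks. -/
def DoublyCovered (π : Finset (Finset ℕ)) (m : ℕ) : Prop := coverCount π m = 2

/-- The partition `π̂` generated by the blocks of `π`: its blocks are the connected
components of the ground set under the relation of lying in a common block of `π`. -/
noncomputable def genPart (π : Finset (Finset ℕ)) : Finset (Finset ℕ) :=
  (π.sup id).image fun m =>
    (π.sup id).filter fun x =>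
      Relation.EqvGen (fun a b => ∃ A ∈ π, a ∈ A ∧ b ∈ A) m x

/-- The unlinking `π̌` of a linked partition `π`. -/
noncomputable def unlink (π : Finset (Finset ℕ)) : Finset (Finset ℕ) :=
  π.image fun A => if SinglyCovered π (fmin A) then A else A.erase (fmin A)

/-- The block of `α` containing `m` (empty if there is none). -/
noncomputable def blockOf (α : Finset (Finset ℕ)) (m : ℕ) : Finset ℕ :=
  (α.filter fun V => m ∈ V).sup id

/-- The successor of `m` in the cycle on the block `V` (elements in increasing order). -/
noncomputable def nextInBlock (V : Finset ℕ) (m : ℕ) : ℕ :=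
  if m = fmax V then fmin V else fmin (V.filter fun x => m < x)

/-- The predecessor of `m` in the cycle on the block `V`. -/
noncomputable def prevInBlock (V : Finset ℕ) (m : ℕ) : ℕ :=
  if m = fmin V then fmax V else fmax (V.filter fun x => x < m)

/-- The permutation `P_α` associated to a partition `α`, as a function: each block
`{i₁ < i₂ < ⋯ < iₘ}` becomes the cycle `i₁ ↦ i₂ ↦ ⋯ ↦ iₘ ↦ i₁`. -/
noncomputable def permOf (α : Finset (Finset ℕ)) (m : ℕ) : ℕ :=
  if m ∈ blockOf α m then nextInBlock (blockOf α m) m else m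

/-- The inverse permutation `P_α⁻¹`, as a function. -/
noncomputable def permOfInv (α : Finset (Finset ℕ)) (m : ℕ) : ℕ :=
  if m ∈ blockOf α m then prevInBlock (blockOf α m) m else m

/-- The action `τ·α` of a map `τ` on a partition `α = {V₁,…,V_p}`, giving
`{τ(V₁),…,τ(V_p)}`. -/
def mapPart (τ : ℕ → ℕ) (α : Finset (Finset ℕ)) : Finset (Finset ℕ) :=
  α.image fun V => V.image τ

/-- The cycled unlinking `π° := P_{π̂}⁻¹ · π̌`. -/
noncomputable def cycUnlink (π : Finset (Finset ℕ)) : Finset (Finset ℕ) :=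
  mapPart (permOfInv (genPart π)) (unlink π)

/-- `NC(n)` as a finset. -/
noncomputable def NCF (n : ℕ) : Finset (Finset (Finset ℕ)) :=
  ((Finset.Icc 1 n).powerset.powerset).filter (IsNCPartition n)

/-- `NCL(n)` as a finset. -/
noncomputable def NCLF (n : ℕ) : Finset (Finset (Finset ℕ)) :=
  ((Finset.Icc 1 n).powerset.powerset).filter (IsNCL n)

/-- The restriction `π|_E`: the blocks of `π` contained in `E`. -/
def restrictL (π : Finset (Finset ℕ)) (E : Finset ℕ) : Finset (Finset ℕ) :=
  π.filter fun A => A ⊆ E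

/-- The partition `β₀` obtained from `β` by leaving blocks of size `≤ 2` intact and
breaking each block `W` with `|W| ≥ 3` into the doubleton `{min W, max W}` together
with `|W| - 2` singletons. -/
noncomputable def breakBlocks (β : Finset (Finset ℕ)) : Finset (Finset ℕ) :=
  β.biUnion fun W =>
    if W.card ≤ 2 then {W}
    else insert {fmin W, fmax W} ((W \ {fmin W, fmax W}).image fun x => ({x} : Finset ℕ))

section Basics

lemma fmin_mem {A : Finset ℕ} (h : A.Nonempty) : fmin A ∈ A := by
  have h' : (A : Set ℕ).Nonempty := by exact_mod_cast h
  have := Nat.sInf_mem h'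
  exact_mod_cast this

lemma fmin_le {A : Finset ℕ} {a : ℕ} (h : a ∈ A) : fmin A ≤ a :=
  Nat.sInf_le (by exact_mod_cast h)

lemma fmin_eq {A : Finset ℕ} {a : ℕ} (ha : a ∈ A) (h : ∀ x ∈ A, a ≤ x) : fmin A = a :=
  le_antisymm (fmin_le ha) (h _ (fmin_mem ⟨a, ha⟩))

lemma fmin_insert_lt {v : ℕ} {A : Finset ℕ} (h : ∀ x ∈ A, v < x) :
    fmin (insert v A) = v := by
  refine fmin_eq (Finset.mem_insert_self _ _) ?_
  intro x hx
  rcases Finset.mem_insert.1 hx with rfl | hx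
  · exact le_rfl
  · exact (h x hx).le

lemma fmin_one {n : ℕ} {A : Finset ℕ} (hA : A ⊆ Finset.Icc 1 n) (h1 : 1 ∈ A) : fmin A = 1 := by
  refine fmin_eq h1 fun x hx => ?_
  exact (Finset.mem_Icc.1 (hA hx)).1

end Basics

section Linked

variable {n : ℕ} {π : Finset (Finset ℕ)}

lemma shared_point (h : IsNCL n π) {A B : Finset ℕ} (hA : A ∈ π) (hB : B ∈ π) (hAB : A ≠ B)
    {m : ℕ} (hmA : m ∈ A) (hmB : m ∈ B) :
    A ∩ B = {m} ∧ 2 ≤ A.card ∧ 2 ≤ B.card ∧ fmin A ≠ fmin B ∧ (m = fmin A ∨ m = fmin B) := by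
  have hm : m ∈ A ∩ B := Finset.mem_inter.2 ⟨hmA, hmB⟩
  rcases h.1.2.2.2 A hA B hB hAB with hemp | ⟨h2A, h2B, hcard1, hne, hall⟩
  · rw [hemp] at hm; exact absurd hm (Finset.notMem_empty m)
  · obtain ⟨x, hx⟩ := Finset.card_eq_one.1 hcard1
    have hxm : m = x := by rw [hx] at hm; exact Finset.mem_singleton.1 hm
    subst hxm
    exact ⟨hx, h2A, h2B, hne, hall m hm⟩

lemma cover_le_two (h : IsNCL n π) {A B C : Finset ℕ} (hA : A ∈ π) (hB : B ∈ π) (hC : C ∈ π)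
    (hAB : A ≠ B) (hAC : A ≠ C) (hBC : B ≠ C) {m : ℕ}
    (hmA : m ∈ A) (hmB : m ∈ B) (hmC : m ∈ C) : False := by
  obtain ⟨-, -, -, nAB, dAB⟩ := shared_point h hA hB hAB hmA hmB
  obtain ⟨-, -, -, nAC, dAC⟩ := shared_point h hA hC hAC hmA hmC
  obtain ⟨-, -, -, nBC, dBC⟩ := shared_point h hB hC hBC hmB hmC
  rcases dAB with e1 | e1 <;> rcases dAC with e2 | e2 <;> rcases dBC with e3 | e3 <;> omega

lemma exists_other_block {A : Finset ℕ} (hA : A ∈ π) {m : ℕ} (hmA : m ∈ A)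
    (hns : ¬ SinglyCovered π m) : ∃ B ∈ π, B ≠ A ∧ m ∈ B := by
  have hmem : A ∈ π.filter fun X => m ∈ X := Finset.mem_filter.2 ⟨hA, hmA⟩
  have h1 : 1 ≤ (π.filter fun X => m ∈ X).card := Finset.card_pos.2 ⟨A, hmem⟩
  have h2 : 1 < (π.filter fun X => m ∈ X).card := by
    rcases h1.lt_or_eq with h | h
    · exact h
    · exact absurd h.symm hns
  obtain ⟨B, hB, hBne⟩ := Finset.exists_mem_ne h2 A
  have hB' := Finset.mem_filter.1 hB
  exact ⟨B, hB'.1, hBne, hB'.2⟩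

lemma singly_covered_of_unique {A : Finset ℕ} (hA : A ∈ π) {m : ℕ} (hmA : m ∈ A)
    (huniq : ∀ B ∈ π, m ∈ B → B = A) : SinglyCovered π m := by
  have : π.filter (fun X => m ∈ X) = {A} := by
    apply Finset.eq_singleton_iff_unique_mem.2
    exact ⟨Finset.mem_filter.2 ⟨hA, hmA⟩, fun B hB =>
      huniq B (Finset.mem_filter.1 hB).1 (Finset.mem_filter.1 hB).2⟩
  unfold SinglyCovered coverCount
  rw [this, Finset.card_singleton]

lemma not_singly_covered {A B : Finset ℕ} (hA : A ∈ π) (hB : B ∈ π)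
    (hAB : A ≠ B) {m : ℕ} (hmA : m ∈ A) (hmB : m ∈ B) : ¬ SinglyCovered π m := by
  intro hs
  have h2 : 1 < (π.filter fun X => m ∈ X).card := by
    apply Finset.one_lt_card.2
    exact ⟨A, Finset.mem_filter.2 ⟨hA, hmA⟩, B, Finset.mem_filter.2 ⟨hB, hmB⟩, hAB⟩
  rw [SinglyCovered, coverCount] at hs
  omega

lemma block_of_one_unique (h : IsNCL n π) {A B : Finset ℕ} (hA : A ∈ π) (hB : B ∈ π)
    (h1A : 1 ∈ A) (h1B : 1 ∈ B) : A = B := by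
  by_contra hne
  obtain ⟨-, -, -, hfne, -⟩ := shared_point h hA hB hne h1A h1B
  exact hfne (by rw [fmin_one (h.1.2.1 A hA) h1A, fmin_one (h.1.2.1 B hB) h1B])

lemma singly_covered_one (h : IsNCL n π) {A : Finset ℕ} (hA : A ∈ π) (h1A : 1 ∈ A) :
    SinglyCovered π 1 :=
  singly_covered_of_unique hA h1A fun B hB h1B => block_of_one_unique h hB hA h1B h1A

end Linked

section Conn

variable {n : ℕ} {π : Finset (Finset ℕ)}

/-- The element-level relation. -/
def relE (π : Finset (Finset ℕ)) (a b : ℕ) : Prop := ∃ A ∈ π, a ∈ A ∧ b ∈ A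

/-- The block-level relation. -/
def relB (π : Finset (Finset ℕ)) (A B : Finset ℕ) : Prop :=
  A ∈ π ∧ B ∈ π ∧ A ≠ B ∧ (A ∩ B).Nonempty

lemma relB_symm : Symmetric (relB π) := by
  rintro A B ⟨h1, h2, h3, h4⟩
  exact ⟨h2, h1, h3.symm, by rwa [Finset.inter_comm]⟩

lemma sup_eq_Icc (hsub : ∀ A ∈ π, A ⊆ Finset.Icc 1 n)
    (hcov : ∀ m ∈ Finset.Icc 1 n, ∃ A ∈ π, m ∈ A) :
    π.sup id = Finset.Icc 1 n := by
  apply Finset.Subset.antisymm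
  · exact Finset.sup_le fun A hA => hsub A hA
  · intro m hm
    obtain ⟨A, hA, hmA⟩ := hcov m hm
    exact Finset.mem_of_subset (Finset.le_sup (f := id) hA) hmA

lemma conn_eqvGen (hsub : ∀ A ∈ π, A ⊆ Finset.Icc 1 n)
    (hcov : ∀ m ∈ Finset.Icc 1 n, ∃ A ∈ π, m ∈ A)
    (hconn : genPart π = {Finset.Icc 1 n}) :
    ∀ a ∈ Finset.Icc 1 n, ∀ b ∈ Finset.Icc 1 n, Relation.EqvGen (relE π) a b := by
  have hs : π.sup id = Finset.Icc 1 n := sup_eq_Icc hsub hcov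
  intro a ha b hb
  have ha' : a ∈ π.sup id := hs ▸ ha
  have hb' : b ∈ π.sup id := hs ▸ hb
  have hmem : (π.sup id).filter
      (fun x => Relation.EqvGen (fun u v => ∃ A ∈ π, u ∈ A ∧ v ∈ A) a x) ∈ genPart π :=
    Finset.mem_image_of_mem _ ha'
  rw [hconn, Finset.mem_singleton] at hmem
  have hbmem : b ∈ (π.sup id).filter
      (fun x => Relation.EqvGen (fun u v => ∃ A ∈ π, u ∈ A ∧ v ∈ A) a x) := by
    rw [hmem]; exact hb
  exact (Finset.mem_filter.1 hbmem).2

lemma genPart_eq_singleton (hn : 1 ≤ n) (hsub : ∀ A ∈ π, A ⊆ Finset.Icc 1 n)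
    (hcov : ∀ m ∈ Finset.Icc 1 n, ∃ A ∈ π, m ∈ A)
    (hrel : ∀ m ∈ Finset.Icc 1 n, Relation.EqvGen (relE π) m 1) :
    genPart π = {Finset.Icc 1 n} := by
  have hs : π.sup id = Finset.Icc 1 n := sup_eq_Icc hsub hcov
  have key : ∀ m ∈ Finset.Icc 1 n, (π.sup id).filter
      (fun x => Relation.EqvGen (fun u v => ∃ A ∈ π, u ∈ A ∧ v ∈ A) m x) = Finset.Icc 1 n := by
    intro m hm
    rw [hs]
    apply Finset.filter_true_of_mem
    intro x hx
    exact Relation.EqvGen.trans _ _ _ (hrel m hm) (Relation.EqvGen.symm _ _ (hrel x hx))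
  apply Finset.eq_singleton_iff_unique_mem.2
  constructor
  · unfold genPart
    rw [hs]
    have h1 : (1 : ℕ) ∈ Finset.Icc 1 n := Finset.mem_Icc.2 ⟨le_rfl, hn⟩
    refine Finset.mem_image.2 ⟨1, h1, ?_⟩
    rw [← hs] at h1 ⊢
    rw [hs] at h1
    exact (hs ▸ key 1 h1)
  · intro z hz
    unfold genPart at hz
    obtain ⟨m, hm, hmz⟩ := Finset.mem_image.1 hz
    rw [hs] at hm
    rw [← hmz]
    exact key m hm

lemma block_reach (hab : Relation.EqvGen (relE π) a b) :
    ((∃ A ∈ π, a ∈ A) ↔ (∃ B ∈ π, b ∈ B)) ∧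
    ∀ A, A ∈ π → a ∈ A → ∀ B, B ∈ π → b ∈ B → Relation.ReflTransGen (relB π) A B := by
  induction hab with
  | rel x y hxy =>
    obtain ⟨C, hC, hxC, hyC⟩ := hxy
    constructor
    · exact ⟨fun _ => ⟨C, hC, hyC⟩, fun _ => ⟨C, hC, hxC⟩⟩
    · intro A hA hxA B hB hyB
      have h1 : Relation.ReflTransGen (relB π) A C := by
        by_cases hAC : A = C
        · subst hAC; exact Relation.ReflTransGen.refl
        · exact Relation.ReflTransGen.single ⟨hA, hC, hAC, ⟨x, Finset.mem_inter.2 ⟨hxA, hxC⟩⟩⟩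
      have h2 : Relation.ReflTransGen (relB π) C B := by
        by_cases hCB : C = B
        · subst hCB; exact Relation.ReflTransGen.refl
        · exact Relation.ReflTransGen.single ⟨hC, hB, hCB, ⟨y, Finset.mem_inter.2 ⟨hyC, hyB⟩⟩⟩
      exact h1.trans h2
  | refl x =>
    constructor
    · exact Iff.rfl
    · intro A hA hxA B hB hxB
      by_cases hAB : A = B
      · subst hAB; exact Relation.ReflTransGen.refl
      · exact Relation.ReflTransGen.single ⟨hA, hB, hAB, ⟨x, Finset.mem_inter.2 ⟨hxA, hxB⟩⟩⟩
  | symm x y hxy ih =>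
    refine ⟨ih.1.symm, fun A hA haA B hB hbB => ?_⟩
    exact (@Relation.ReflTransGen.stdSymm _ _ ⟨fun _ _ hh => relB_symm hh⟩).symm _ _ (ih.2 B hB hbB A hA haA)
  | trans x y z hxy hyz ih1 ih2 =>
    refine ⟨ih1.1.trans ih2.1, fun A hA hxA B hB hzB => ?_⟩
    obtain ⟨C, hC, hyC⟩ := ih1.1.1 ⟨A, hA, hxA⟩
    exact (ih1.2 A hA hxA C hC hyC).trans (ih2.2 C hC hyC B hB hzB)

end Conn

section Graph

variable {n : ℕ} {π : Finset (Finset ℕ)}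

/-- The intersection graph of the blocks. -/
def blockGraph (π : Finset (Finset ℕ)) : SimpleGraph {A : Finset ℕ // A ∈ π} where
  Adj A B := A.1 ≠ B.1 ∧ (A.1 ∩ B.1).Nonempty
  symm := by constructor; rintro A B ⟨h1, h2⟩; exact ⟨h1.symm, by rwa [Finset.inter_comm]⟩
  loopless := by constructor; rintro A ⟨h1, -⟩; exact h1 rfl

lemma reach_graph {A B : Finset ℕ} (h : Relation.ReflTransGen (relB π) A B) :
    ∀ (hA : A ∈ π) (hB : B ∈ π), (blockGraph π).Reachable ⟨A, hA⟩ ⟨B, hB⟩ := by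
  induction h with
  | refl => intro hA hB; exact SimpleGraph.Reachable.refl _
  | tail h1 hstep ih =>
    intro hA hC
    exact (ih hA hstep.1).trans (SimpleGraph.Adj.reachable ⟨hstep.2.2.1, hstep.2.2.2⟩)

lemma blockGraph_connected (h : IsNCL n π) (hn : 1 ≤ n)
    (hconn : genPart π = {Finset.Icc 1 n}) : (blockGraph π).Connected := by
  have hcov := h.1.2.2.1
  have hsub := h.1.2.1
  have h1 : (1 : ℕ) ∈ Finset.Icc 1 n := Finset.mem_Icc.2 ⟨le_rfl, hn⟩
  obtain ⟨A₁, hA₁, h1A₁⟩ := hcov 1 h1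
  have hne : Nonempty {A : Finset ℕ // A ∈ π} := ⟨⟨A₁, hA₁⟩⟩
  refine SimpleGraph.Connected.mk ?_
  rintro ⟨A, hA⟩ ⟨B, hB⟩
  obtain ⟨a, haA⟩ := h.1.1 A hA
  obtain ⟨b, hbB⟩ := h.1.1 B hB
  have hab := conn_eqvGen hsub hcov hconn a (hsub A hA haA) b (hsub B hB hbB)
  exact reach_graph ((block_reach hab).2 A hA haA B hB hbB) hA hB

lemma exists_parent {V : Type*} {G : SimpleGraph V} (hc : G.Connected) {a v : V} (hne : v ≠ a) :
    ∃ u, G.Adj u v ∧ G.dist a u < G.dist a v := by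
  obtain ⟨p, hp⟩ := hc.exists_walk_length_eq_dist v a
  cases p with
  | nil => exact absurd rfl hne
  | @cons _ u _ hadj q =>
    refine ⟨u, hadj.symm, ?_⟩
    have h1 : G.dist a u ≤ q.length := SimpleGraph.dist_comm ▸ SimpleGraph.dist_le q
    have h2 : G.dist a v = q.length + 1 := by
      rw [SimpleGraph.dist_comm, ← hp, SimpleGraph.Walk.length_cons]
    omega

end Graph

section L3

variable {n : ℕ} {π : Finset (Finset ℕ)}

lemma min_doubly (h : IsNCL n π) (hn : 1 ≤ n) (hconn : genPart π = {Finset.Icc 1 n})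
    {A₁ : Finset ℕ} (hA₁ : A₁ ∈ π) (h1A₁ : 1 ∈ A₁) :
    ∀ A ∈ π, A ≠ A₁ → ∃ B ∈ π, B ≠ A ∧ fmin A ∈ B := by
  classical
  set G := blockGraph π with hG
  have hGc : G.Connected := blockGraph_connected h hn hconn
  set root : {X : Finset ℕ // X ∈ π} := ⟨A₁, hA₁⟩ with hroot
  set D : Finset ℕ → ℕ := fun X => if hX : X ∈ π then G.dist root ⟨X, hX⟩ else 0 with hD
  have hDval : ∀ (X : Finset ℕ) (hX : X ∈ π), D X = G.dist root ⟨X, hX⟩ := by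
    intro X hX; simp only [hD, dif_pos hX]
  set good : Finset (Finset ℕ) := π.filter (fun H => ∃ U ∈ π, U ≠ H ∧ fmin H ∈ U) with hgood
  have hsubgood : good ⊆ π.erase A₁ := by
    intro H hH
    obtain ⟨hHπ, U, hU, hUne, hxU⟩ := Finset.mem_filter.1 hH
    refine Finset.mem_erase.2 ⟨?_, hHπ⟩
    rintro rfl
    have : fmin H = 1 := fmin_one (h.1.2.1 H hHπ) h1A₁
    rw [this] at hxU
    exact hUne (block_of_one_unique h hU hHπ hxU h1A₁)
  set Φ : Finset ℕ → Finset ℕ → Prop := fun A H =>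
    H ∈ π ∧ fmin H ∈ A ∧ (∃ U ∈ π, U ≠ H ∧ fmin H ∈ U) ∧
      (H ≠ A → D H < D A) ∧
      (H = A → ∃ U ∈ π, U ≠ A ∧ fmin A ∈ U ∧ D U < D A) with hΦ
  have hex : ∀ A ∈ π.erase A₁, ∃ H, Φ A H := by
    intro A hAe
    obtain ⟨hAne, hA⟩ := Finset.mem_erase.1 hAe
    have hvne : (⟨A, hA⟩ : {X : Finset ℕ // X ∈ π}) ≠ root := by
      intro hx
      exact hAne (congrArg Subtype.val hx)
    obtain ⟨⟨U, hU⟩, hadj, hdist⟩ := exists_parent hGc hvne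
    have hUA : U ≠ A := hadj.1
    obtain ⟨y, hy⟩ := hadj.2
    have hyU : y ∈ U := (Finset.mem_inter.1 hy).1
    have hyA : y ∈ A := (Finset.mem_inter.1 hy).2
    have hdist' : D U < D A := by rw [hDval U hU, hDval A hA]; exact hdist
    obtain ⟨-, -, -, -, hd⟩ := shared_point h hU hA hUA hyU hyA
    rcases hd with rfl | rfl
    · exact ⟨U, hU, hyA, ⟨A, hA, hUA.symm, hyA⟩, fun _ => hdist', fun he => absurd he hUA⟩
    · exact ⟨A, hA, fmin_mem (h.1.1 A hA), ⟨U, hU, hUA, hyU⟩,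
        fun hne => absurd rfl hne, fun _ => ⟨U, hU, hUA, hyU, hdist'⟩⟩
  set f : Finset ℕ → Finset ℕ := fun A => if hA : ∃ H, Φ A H then Classical.choose hA else ∅
    with hf
  have hfΦ : ∀ A ∈ π.erase A₁, Φ A (f A) := by
    intro A hAe
    have hA := hex A hAe
    simp only [hf, dif_pos hA]
    exact Classical.choose_spec hA
  have hmaps : ∀ A ∈ π.erase A₁, f A ∈ good := by
    intro A hAe
    obtain ⟨hH, -, hUcl, -, -⟩ := hfΦ A hAe
    exact Finset.mem_filter.2 ⟨hH, hUcl⟩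
  have hinj : Set.InjOn f (π.erase A₁ : Finset (Finset ℕ)) := by
    intro A hAmem A' hA'mem hfe
    by_contra hne
    have hA : A ∈ π := (Finset.mem_erase.1 hAmem).2
    have hA' : A' ∈ π := (Finset.mem_erase.1 hA'mem).2
    obtain ⟨hH1, hx1, -, hne1, heq1⟩ := hfΦ A hAmem
    obtain ⟨hH2, hx2, -, hne2, heq2⟩ := hfΦ A' hA'mem
    rw [hfe] at hH1 hx1 hne1 heq1
    set H := f A' with hHdef
    by_cases he1 : H = A <;> by_cases he2 : H = A'
    · exact hne (he1 ▸ he2)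
    · obtain ⟨U, hU, hUne, hxU, hdU⟩ := heq1 he1
      have hdH : D H < D A' := hne2 he2
      rw [he1] at hx2 hdH
      have hxA : fmin A ∈ A := he1 ▸ (fmin_mem (h.1.1 H hH1))
      by_cases hUA' : U = A'
      · subst hUA'
        omega
      · exact cover_le_two h hA hA' hU hne (fun hh => hUne hh.symm) (fun hh => hUA' hh.symm)
          hxA hx2 hxU
    · obtain ⟨U, hU, hUne, hxU, hdU⟩ := heq2 he2
      have hdH : D H < D A := hne1 he1
      rw [he2] at hx1 hdH
      have hxA' : fmin A' ∈ A' := he2 ▸ (fmin_mem (h.1.1 H hH2))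
      by_cases hUA : U = A
      · subst hUA
        omega
      · exact cover_le_two h hA' hA hU (Ne.symm hne) (fun hh => hUne hh.symm)
          (fun hh => hUA hh.symm) hxA' hx1 hxU
    · refine cover_le_two h hH1 hA hA' (Ne.symm ?_) (Ne.symm ?_) hne
        (fmin_mem (h.1.1 H hH1)) hx1 hx2
      · exact fun hh => he1 hh.symm
      · exact fun hh => he2 hh.symm
  have hcard : (π.erase A₁).card ≤ good.card :=
    Finset.card_le_card_of_injOn f hmaps hinj
  have hgeq : good = π.erase A₁ :=
    Finset.eq_of_subset_of_card_le hsubgood hcard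
  intro A hA hAne
  have : A ∈ good := hgeq ▸ Finset.mem_erase.2 ⟨hAne, hA⟩
  obtain ⟨-, U, hU, hUne, hxU⟩ := Finset.mem_filter.1 this
  exact ⟨U, hU, hUne, hxU⟩

end L3

section L4

variable {n : ℕ} {π : Finset (Finset ℕ)}

lemma gap_lemma (h : IsNCL n π) (hconn : genPart π = {Finset.Icc 1 n})
    {A B : Finset ℕ} (hA : A ∈ π) (hB : B ∈ π) (hne : B ≠ A) (hmB : fmin A ∈ B) :
    fmin A + 1 ∈ A := by
  classical
  set m := fmin A with hm
  have hAne : A.Nonempty := h.1.1 A hA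
  have hmA : m ∈ A := fmin_mem hAne
  obtain ⟨hint, hcA, hcB, hfne, -⟩ := shared_point h hA hB (Ne.symm hne) hmA hmB
  have hfB : fmin B < m := by
    have h1 : fmin B ≤ m := fmin_le hmB
    have h2 : fmin B ≠ m := fun hh => hfne (hh ▸ rfl)
    omega
  have hBne : B.Nonempty := h.1.1 B hB
  have herase : (A.erase m).Nonempty := by
    rw [← Finset.card_pos, Finset.card_erase_of_mem hmA]
    omega
  set m' := fmin (A.erase m) with hm'
  have hm'A : m' ∈ A := Finset.mem_of_mem_erase (fmin_mem herase)
  have hm'ne : m' ≠ m := Finset.ne_of_mem_erase (fmin_mem herase)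
  have hm'gt : m < m' := by
    have := fmin_le hm'A
    omega
  -- no element of A lies strictly between m and m'
  have hAgap : ∀ w ∈ A, ¬ (m < w ∧ w < m') := by
    rintro w hw ⟨h1, h2⟩
    have : m' ≤ w := fmin_le (Finset.mem_erase.2 ⟨by omega, hw⟩)
    omega
  suffices hsuff : m' = m + 1 by rw [← hsuff]; exact hm'A
  by_contra hcon
  set x := m + 1 with hx
  have hxx : m < x ∧ x < m' := by omega
  have hmub : m ≤ n := (Finset.mem_Icc.1 (h.1.2.1 A hA hmA)).2
  have hm1 : 1 ≤ m := (Finset.mem_Icc.1 (h.1.2.1 A hA hmA)).1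
  have hm'ub : m' ≤ n := (Finset.mem_Icc.1 (h.1.2.1 A hA hm'A)).2
  have hxIcc : x ∈ Finset.Icc 1 n := Finset.mem_Icc.2 ⟨by omega, by omega⟩
  have h1Icc : (1 : ℕ) ∈ Finset.Icc 1 n := Finset.mem_Icc.2 ⟨le_rfl, by omega⟩
  -- Step: blocks meeting the open interval (m, m') are contained in it
  have hS : ∀ C ∈ π, ∀ y ∈ C, m < y → y < m' → ∀ z ∈ C, m < z ∧ z < m' := by
    intro C hC y hyC hy1 hy2 z hzC
    have hCA : C ≠ A := by
      rintro rfl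
      exact hAgap y hyC ⟨hy1, hy2⟩
    have hzm : z ≠ m := by
      rintro rfl
      -- C contains m, so C = B, but then fmin B < m < y < m' gives a crossing with A
      have hCB : C = B := by
        by_contra hCB
        exact cover_le_two h hA hB hC (Ne.symm hne) (Ne.symm hCA) (Ne.symm hCB) hmA hmB hzC
      subst hCB
      exact h.2 ⟨C, hC, A, hA, hCA, fmin C, fmin_mem hBne, m, hmA, y, hyC, m', hm'A,
        hfB, hy1, hy2⟩
    have hzlt : ¬ z < m := by
      intro hzm'
      exact h.2 ⟨C, hC, A, hA, hCA, z, hzC, m, hmA, y, hyC, m', hm'A, by omega, hy1, hy2⟩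
    have hzm' : z ≠ m' := by
      rintro rfl
      obtain ⟨-, -, -, -, hd⟩ := shared_point h hC hA hCA hzC hm'A
      rcases hd with hd | hd
      · have := fmin_le hyC
        omega
      · omega
    have hzgt : ¬ m' < z := by
      intro hzg
      exact h.2 ⟨A, hA, C, hC, Ne.symm hCA, m, hmA, y, hyC, m', hm'A, z, hzC, hy1, hy2, hzg⟩
    omega
  -- the invariant propagates along the equivalence relation
  have hinv : ∀ u v : ℕ, Relation.EqvGen (relE π) u v →
      ((m < u ∧ u < m') ↔ (m < v ∧ v < m')) := by
    intro u v huv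
    induction huv with
    | rel u v huv =>
      obtain ⟨C, hC, huC, hvC⟩ := huv
      constructor
      · rintro ⟨h1, h2⟩; exact hS C hC u huC h1 h2 v hvC
      · rintro ⟨h1, h2⟩; exact hS C hC v hvC h1 h2 u huC
    | refl u => exact Iff.rfl
    | symm u v _ ih => exact ih.symm
    | trans u v w _ _ ih1 ih2 => exact ih1.trans ih2
  have hx1 : Relation.EqvGen (relE π) x 1 :=
    conn_eqvGen h.1.2.1 h.1.2.2.1 hconn x hxIcc 1 h1Icc
  have := (hinv x 1 hx1).1 hxx
  omega

end L4

section Forward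

variable {n : ℕ} {π : Finset (Finset ℕ)}

noncomputable def uf (π : Finset (Finset ℕ)) (A : Finset ℕ) : Finset ℕ :=
  if SinglyCovered π (fmin A) then A else A.erase (fmin A)

lemma unlink_eq_image : unlink π = π.image (uf π) := rfl

lemma uf_subset {A : Finset ℕ} : uf π A ⊆ A := by
  unfold uf
  split
  · exact Finset.Subset.refl A
  · exact Finset.erase_subset _ _

lemma not_singly_data (h : IsNCL n π) {A : Finset ℕ} (hA : A ∈ π) (hAne : A.Nonempty)
    (hs : ¬ SinglyCovered π (fmin A)) :
    ∃ B ∈ π, B ≠ A ∧ fmin A ∈ B ∧ A ∩ B = {fmin A} ∧ 2 ≤ A.card ∧ fmin B < fmin A := by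
  obtain ⟨B, hB, hBA, hmB⟩ := exists_other_block hA (fmin_mem hAne) hs
  obtain ⟨hint, hcA, -, hfne, hd⟩ := shared_point h hA hB (Ne.symm hBA) (fmin_mem hAne) hmB
  have hfB : fmin B < fmin A := by
    have h1 : fmin B ≤ fmin A := fmin_le hmB
    rcases hd with hd | hd
    · omega
    · exfalso; exact hfne (hd ▸ rfl)
  exact ⟨B, hB, hBA, hmB, hint, hcA, hfB⟩

lemma uf_nonempty (h : IsNCL n π) {A : Finset ℕ} (hA : A ∈ π) : (uf π A).Nonempty := by
  have hAne : A.Nonempty := h.1.1 A hA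
  unfold uf
  split
  · exact hAne
  next hs =>
    obtain ⟨B, hB, hBA, hmB, hint, hcA, -⟩ := not_singly_data h hA hAne hs
    rw [← Finset.card_pos, Finset.card_erase_of_mem (fmin_mem hAne)]
    omega

lemma uf_inj (h : IsNCL n π) {A B : Finset ℕ} (hA : A ∈ π) (hB : B ∈ π)
    (heq : uf π A = uf π B) : A = B := by
  by_contra hne
  have hAne : A.Nonempty := h.1.1 A hA
  have hBne : B.Nonempty := h.1.1 B hB
  unfold uf at heq
  split at heq <;> split at heq
  · exact hne heq
  · -- A = B.erase (fmin B), so A ⊆ B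
    rename_i hsB
    obtain ⟨a, ha⟩ := hAne
    have haB : a ∈ B := Finset.mem_of_mem_erase (heq ▸ ha)
    obtain ⟨hint, hcA, -, -, -⟩ := shared_point h hA hB hne ha haB
    have hsub : A ⊆ B := heq ▸ (Finset.erase_subset _ _)
    have : A ⊆ A ∩ B := Finset.subset_inter (Finset.Subset.refl A) hsub
    rw [hint] at this
    have := Finset.card_le_card this
    simp at this
    omega
  · rename_i hsA _
    obtain ⟨b, hb⟩ := hBne
    have hbA : b ∈ A := Finset.mem_of_mem_erase (heq ▸ hb)
    obtain ⟨hint, -, hcB, -, -⟩ := shared_point h hA hB hne hbA hb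
    have hsub : B ⊆ A := heq.symm ▸ (Finset.erase_subset _ _)
    have : B ⊆ A ∩ B := Finset.subset_inter hsub (Finset.Subset.refl B)
    rw [hint] at this
    have := Finset.card_le_card this
    simp at this
    omega
  · rename_i hsA hsB
    obtain ⟨BA, hBA, hBAne, hmBA, hintA, hcA, -⟩ := not_singly_data h hA hAne hsA
    have hX : (A.erase (fmin A)).Nonempty := by
      rw [← Finset.card_pos, Finset.card_erase_of_mem (fmin_mem hAne)]
      omega
    obtain ⟨x, hx⟩ := hX
    have hxA : x ∈ A := Finset.mem_of_mem_erase hx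
    have hxnA : x ≠ fmin A := Finset.ne_of_mem_erase hx
    have hxB : x ∈ B := Finset.mem_of_mem_erase (heq ▸ hx)
    have hxnB : x ≠ fmin B := Finset.ne_of_mem_erase (heq ▸ hx)
    obtain ⟨-, -, -, -, hd⟩ := shared_point h hA hB hne hxA hxB
    rcases hd with hd | hd
    · exact hxnA hd
    · exact hxnB hd

lemma uf_disjoint (h : IsNCL n π) {A B : Finset ℕ} (hA : A ∈ π) (hB : B ∈ π) (hne : A ≠ B) :
    uf π A ∩ uf π B = ∅ := by
  rcases h.1.2.2.2 A hA B hB hne with hemp | ⟨-, -, hcard1, -, hall⟩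
  · have hsub : uf π A ∩ uf π B ⊆ A ∩ B := Finset.inter_subset_inter uf_subset uf_subset
    rw [hemp] at hsub
    exact Finset.subset_empty.1 hsub
  · obtain ⟨x, hx⟩ := Finset.card_eq_one.1 hcard1
    have hxA : x ∈ A := (Finset.mem_inter.1 (hx ▸ Finset.mem_singleton_self x)).1
    have hxB : x ∈ B := (Finset.mem_inter.1 (hx ▸ Finset.mem_singleton_self x)).2
    have hns : ¬ SinglyCovered π x := not_singly_covered hA hB hne hxA hxB
    apply Finset.eq_empty_of_forall_notMem
    intro y hy
    have hyA : y ∈ uf π A := (Finset.mem_inter.1 hy).1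
    have hyB : y ∈ uf π B := (Finset.mem_inter.1 hy).2
    have hyAB : y ∈ A ∩ B := Finset.mem_inter.2 ⟨uf_subset hyA, uf_subset hyB⟩
    rw [hx, Finset.mem_singleton] at hyAB
    subst hyAB
    rcases hall y (hx ▸ Finset.mem_inter.2 ⟨hxA, hxB⟩) with hfa | hfb
    · rw [hfa] at hns
      unfold uf at hyA
      rw [if_neg hns] at hyA
      exact Finset.notMem_erase _ _ (hfa ▸ hyA)
    · rw [hfb] at hns
      unfold uf at hyB
      rw [if_neg hns] at hyB
      exact Finset.notMem_erase _ _ (hfb ▸ hyB)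

lemma unlink_mem_T (h : IsNCL n π) (hn : 2 ≤ n) (hconn : genPart π = {Finset.Icc 1 n}) :
    IsNCPartition n (unlink π) ∧ ∃ V ∈ unlink π, 1 ∈ V ∧ 2 ∈ V := by
  have hn1 : 1 ≤ n := by omega
  have h1Icc : (1 : ℕ) ∈ Finset.Icc 1 n := Finset.mem_Icc.2 ⟨le_rfl, hn1⟩
  have h2Icc : (2 : ℕ) ∈ Finset.Icc 1 n := Finset.mem_Icc.2 ⟨by omega, hn⟩
  obtain ⟨A₁, hA₁, h1A₁⟩ := h.1.2.2.1 1 h1Icc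
  -- 2 belongs to the block of 1
  have h2A₁ : 2 ∈ A₁ := by
    obtain ⟨B, hB, h2B⟩ := h.1.2.2.1 2 h2Icc
    by_cases h1B : 1 ∈ B
    · rwa [block_of_one_unique h hA₁ hB h1A₁ h1B]
    · have hBA₁ : B ≠ A₁ := fun hh => h1B (hh ▸ h1A₁)
      have hfB : fmin B = 2 := by
        have h1 : fmin B ≤ 2 := fmin_le h2B
        have h2 : 1 ≤ fmin B := (Finset.mem_Icc.1 (h.1.2.1 B hB (fmin_mem ⟨2, h2B⟩))).1
        have h3 : fmin B ≠ 1 := fun hh => h1B (hh ▸ fmin_mem ⟨2, h2B⟩)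
        omega
      obtain ⟨C, hC, hCB, hfC⟩ := min_doubly h hn1 hconn hA₁ h1A₁ B hB hBA₁
      rw [hfB] at hfC
      obtain ⟨-, -, -, hfne, hd⟩ := shared_point h hB hC (Ne.symm hCB) h2B hfC
      have hfCval : fmin C = 1 := by
        have h1 : fmin C ≤ 2 := fmin_le hfC
        have h2 : 1 ≤ fmin C := (Finset.mem_Icc.1 (h.1.2.1 C hC (fmin_mem ⟨2, hfC⟩))).1
        have h3 : fmin C ≠ 2 := by
          rw [hfB] at hfne
          exact fun hh => hfne hh.symm
        omega
      have h1C : 1 ∈ C := hfCval ▸ fmin_mem ⟨2, hfC⟩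
      rw [← block_of_one_unique h hA₁ hC h1A₁ h1C] at hfC
      exact hfC
  have hs1 : SinglyCovered π 1 := singly_covered_one h hA₁ h1A₁
  have hufA₁ : uf π A₁ = A₁ := by
    unfold uf
    rw [fmin_one (h.1.2.1 A₁ hA₁) h1A₁, if_pos hs1]
  refine ⟨⟨⟨?_, ?_, ?_, ?_⟩, ?_⟩, ?_⟩
  · -- nonempty
    intro V hV
    obtain ⟨A, hA, rfl⟩ := Finset.mem_image.1 (unlink_eq_image ▸ hV)
    exact uf_nonempty h hA
  · -- subset
    intro V hV
    obtain ⟨A, hA, rfl⟩ := Finset.mem_image.1 (unlink_eq_image ▸ hV)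
    exact uf_subset.trans (h.1.2.1 A hA)
  · -- cover
    intro m hm
    obtain ⟨A, hA, hmA⟩ := h.1.2.2.1 m hm
    by_cases hmuf : m ∈ uf π A
    · exact ⟨uf π A, unlink_eq_image ▸ Finset.mem_image_of_mem _ hA, hmuf⟩
    · have hs : ¬ SinglyCovered π (fmin A) ∧ m = fmin A := by
        unfold uf at hmuf
        split at hmuf
        · exact absurd hmA hmuf
        · rename_i hsA
          refine ⟨hsA, ?_⟩
          by_contra hmm
          exact hmuf (Finset.mem_erase.2 ⟨hmm, hmA⟩)
      obtain ⟨hsA, rfl⟩ := hs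
      obtain ⟨B, hB, hBA, hmB, -, -, hfBlt⟩ := not_singly_data h hA (h.1.1 A hA) hsA
      refine ⟨uf π B, unlink_eq_image ▸ Finset.mem_image_of_mem _ hB, ?_⟩
      unfold uf
      split
      · exact hmB
      · refine Finset.mem_erase.2 ⟨?_, hmB⟩
        omega
  · -- pairwise disjoint
    intro V hV W hW hVW
    obtain ⟨A, hA, rfl⟩ := Finset.mem_image.1 (unlink_eq_image ▸ hV)
    obtain ⟨B, hB, rfl⟩ := Finset.mem_image.1 (unlink_eq_image ▸ hW)
    exact uf_disjoint h hA hB (fun hh => hVW (hh ▸ rfl))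
  · -- noncrossing
    rintro ⟨V, hV, W, hW, hVW, a, ha, b, hb, c, hc, d, hd, h1, h2, h3⟩
    obtain ⟨A, hA, rfl⟩ := Finset.mem_image.1 (unlink_eq_image ▸ hV)
    obtain ⟨B, hB, rfl⟩ := Finset.mem_image.1 (unlink_eq_image ▸ hW)
    have hAB : A ≠ B := fun hh => hVW (hh ▸ rfl)
    exact h.2 ⟨A, hA, B, hB, hAB, a, uf_subset ha, b, uf_subset hb, c, uf_subset hc,
      d, uf_subset hd, h1, h2, h3⟩
  · -- 1 and 2 in the same block
    exact ⟨A₁, unlink_eq_image ▸ (hufA₁ ▸ Finset.mem_image_of_mem _ hA₁), h1A₁, h2A₁⟩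

end Forward

section Relink

variable {n : ℕ} {α : Finset (Finset ℕ)}

/-- Re-insert the minimum: the inverse of unlinking. -/
noncomputable def rl (V : Finset ℕ) : Finset ℕ := if 1 ∈ V then V else insert (fmin V - 1) V

/-- The inverse map of `unlink` on the relevant sets. -/
noncomputable def relink (α : Finset (Finset ℕ)) : Finset (Finset ℕ) := α.image rl

lemma mem_rl {x : ℕ} {V : Finset ℕ} : x ∈ rl V ↔ x ∈ V ∨ (1 ∉ V ∧ x = fmin V - 1) := by
  unfold rl
  split
  · next h1 => simp [h1]
  · next h1 => rw [Finset.mem_insert]; tauto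

lemma subset_rl {V : Finset ℕ} : V ⊆ rl V := fun x hx => mem_rl.2 (Or.inl hx)

section Alpha

variable (hα : IsNCPartition n α) {V₀ : Finset ℕ} (hV₀ : V₀ ∈ α) (h1V₀ : 1 ∈ V₀) (h2V₀ : 2 ∈ V₀)

include hα

lemma blocks_eq_of_mem {V W : Finset ℕ} (hV : V ∈ α) (hW : W ∈ α) {x : ℕ}
    (hxV : x ∈ V) (hxW : x ∈ W) : V = W := by
  by_contra hne
  have := hα.1.2.2.2 V hV W hW hne
  rw [Finset.eq_empty_iff_forall_notMem] at this
  exact this x (Finset.mem_inter.2 ⟨hxV, hxW⟩)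

lemma fmin_ge_two {V : Finset ℕ} (hV : V ∈ α) (h1 : 1 ∉ V) : 2 ≤ fmin V ∧ fmin V ≤ n := by
  have hne : V.Nonempty := hα.1.1 V hV
  have hmem := fmin_mem hne
  have hIcc := Finset.mem_Icc.1 (hα.1.2.1 V hV hmem)
  have : fmin V ≠ 1 := fun hh => h1 (hh ▸ hmem)
  omega

lemma rlv_not_mem {V : Finset ℕ} (hV : V ∈ α) (h1 : 1 ∉ V) : fmin V - 1 ∉ V := by
  intro hmem
  have h2 := (fmin_ge_two hα hV h1).1
  have := fmin_le hmem
  omega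

lemma fmin_rl {V : Finset ℕ} (hV : V ∈ α) :
    fmin (rl V) = if 1 ∈ V then 1 else fmin V - 1 := by
  unfold rl
  split
  · next h1 => exact fmin_one ((hα.1.2.1 V hV)) h1
  · next h1 =>
    have h2 := (fmin_ge_two hα hV h1).1
    apply fmin_insert_lt
    intro x hx
    have := fmin_le hx
    omega

include hV₀ h1V₀ h2V₀

lemma new_min_ne_one {W : Finset ℕ} (hW : W ∈ α) (h1W : 1 ∉ W) : fmin W - 1 ≠ 1 := by
  intro hw
  have h2W : fmin W = 2 := by
    have := (fmin_ge_two hα hW h1W).1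
    omega
  have h2mem : 2 ∈ W := h2W ▸ fmin_mem (hα.1.1 W hW)
  have : W = V₀ := blocks_eq_of_mem hα hW hV₀ h2mem h2V₀
  exact h1W (this ▸ h1V₀)

lemma rl_inj {V W : Finset ℕ} (hV : V ∈ α) (hW : W ∈ α) (heq : rl V = rl W) : V = W := by
  by_contra hne
  have hVne : V.Nonempty := hα.1.1 V hV
  have hWne : W.Nonempty := hα.1.1 W hW
  have hdisj : ∀ x, x ∈ V → x ∈ W → False := by
    intro x h1 h2
    exact hne (blocks_eq_of_mem hα hV hW h1 h2)
  have hfne : fmin V ≠ fmin W :=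
    fun hh => hne (blocks_eq_of_mem hα hV hW (fmin_mem hVne) (hh ▸ fmin_mem hWne))
  unfold rl at heq
  split at heq <;> split at heq
  · next h1 h2 => exact hne (blocks_eq_of_mem hα hV hW h1 h2)
  · next h1 h2 =>
    -- V = insert (fmin W - 1) W
    have h1' : (1 : ℕ) ∈ insert (fmin W - 1) W := heq ▸ h1
    rcases Finset.mem_insert.1 h1' with hw | hw
    · exact new_min_ne_one hα hV₀ h1V₀ h2V₀ hW h2 hw.symm
    · exact h2 hw
  · next h1 h2 =>
    have h2' : (1 : ℕ) ∈ insert (fmin V - 1) V := heq ▸ h2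
    rcases Finset.mem_insert.1 h2' with hw | hw
    · exact new_min_ne_one hα hV₀ h1V₀ h2V₀ hV h1 hw.symm
    · exact h1 hw
  · next h1 h2 =>
    have hV2 := (fmin_ge_two hα hV h1).1
    have hW2 := (fmin_ge_two hα hW h2).1
    have hvw : fmin V - 1 ≠ fmin W - 1 := by omega
    have hvW : fmin V - 1 ∈ W := by
      have : fmin V - 1 ∈ insert (fmin W - 1) W := heq ▸ Finset.mem_insert_self _ _
      rcases Finset.mem_insert.1 this with hh | hh
      · exact absurd hh hvw
      · exact hh
    have hwV : fmin W - 1 ∈ V := by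
      have : fmin W - 1 ∈ insert (fmin V - 1) V := heq ▸ Finset.mem_insert_self _ _
      rcases Finset.mem_insert.1 this with hh | hh
      · exact absurd hh.symm hvw
      · exact hh
    have h3 := fmin_le hvW
    have h4 := fmin_le hwV
    omega

omit hV₀ h1V₀ h2V₀ in
lemma rl_card_two {V : Finset ℕ} (hV : V ∈ α) (h1 : 1 ∉ V) : 2 ≤ (rl V).card := by
  have : rl V = insert (fmin V - 1) V := if_neg h1
  rw [this, Finset.card_insert_of_notMem (rlv_not_mem hα hV h1)]
  have := Finset.card_pos.2 (hα.1.1 V hV)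
  omega

lemma relink_linked : IsLinkedPartitionOfSet (Finset.Icc 1 n) (relink α) := by
  have hdisj : ∀ V ∈ α, ∀ W ∈ α, V ≠ W → ∀ x, x ∈ V → x ∈ W → False := by
    intro V hV W hW hne x h1 h2
    exact hne (blocks_eq_of_mem hα hV hW h1 h2)
  refine ⟨?_, ?_, ?_, ?_⟩
  · intro A hA
    obtain ⟨V, hV, rfl⟩ := Finset.mem_image.1 hA
    exact (hα.1.1 V hV).mono subset_rl
  · intro A hA
    obtain ⟨V, hV, rfl⟩ := Finset.mem_image.1 hA
    intro x hx
    rcases mem_rl.1 hx with hx | ⟨h1, rfl⟩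
    · exact hα.1.2.1 V hV hx
    · have := fmin_ge_two hα hV h1
      exact Finset.mem_Icc.2 ⟨by omega, by omega⟩
  · intro m hm
    obtain ⟨V, hV, hmV⟩ := hα.1.2.2.1 m hm
    exact ⟨rl V, Finset.mem_image_of_mem _ hV, subset_rl hmV⟩
  · intro A hA B hB hne
    obtain ⟨V, hV, rfl⟩ := Finset.mem_image.1 hA
    obtain ⟨W, hW, rfl⟩ := Finset.mem_image.1 hB
    have hVW : V ≠ W := fun hh => hne (hh ▸ rfl)
    have hfne : fmin V ≠ fmin W := fun hh => hVW (blocks_eq_of_mem hα hV hW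
      (fmin_mem (hα.1.1 V hV)) (hh ▸ fmin_mem (hα.1.1 W hW)))
    -- the possible intersection points
    have hmem : ∀ x, x ∈ rl V ∩ rl W →
        (1 ∉ V ∧ x = fmin V - 1 ∧ x ∈ W) ∨ (1 ∉ W ∧ x = fmin W - 1 ∧ x ∈ V) := by
      intro x hx
      obtain ⟨hxV, hxW⟩ := Finset.mem_inter.1 hx
      rcases mem_rl.1 hxV with h1 | ⟨h1, rfl⟩ <;> rcases mem_rl.1 hxW with h2 | h2
      · exact absurd (blocks_eq_of_mem hα hV hW h1 h2) hVW
      · exact Or.inr ⟨h2.1, h2.2, h1⟩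
      · exact Or.inl ⟨h1, rfl, h2⟩
      · -- x = fmin V - 1 = fmin W - 1 : impossible
        exfalso
        have hV2 := (fmin_ge_two hα hV h1).1
        have hW2 := (fmin_ge_two hα hW h2.1).1
        have := h2.2
        apply hfne
        omega
    -- not both new mins can be in the other's block
    have hnotboth : ¬ ((1 ∉ V ∧ fmin V - 1 ∈ W) ∧ (1 ∉ W ∧ fmin W - 1 ∈ V)) := by
      rintro ⟨⟨h1, hvW⟩, ⟨h2, hwV⟩⟩
      have hV2 := (fmin_ge_two hα hV h1).1
      have hW2 := (fmin_ge_two hα hW h2).1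
      have h3 := fmin_le hvW
      have h4 := fmin_le hwV
      omega
    by_cases hcase : (1 ∉ V ∧ fmin V - 1 ∈ W) ∨ (1 ∉ W ∧ fmin W - 1 ∈ V)
    · right
      rcases hcase with ⟨h1, hvW⟩ | ⟨h2, hwV⟩
      · -- intersection is {fmin V - 1}
        have hint : rl V ∩ rl W = {fmin V - 1} := by
          apply Finset.eq_singleton_iff_unique_mem.2
          constructor
          · exact Finset.mem_inter.2 ⟨mem_rl.2 (Or.inr ⟨h1, rfl⟩), subset_rl hvW⟩
          · intro x hx
            rcases hmem x hx with ⟨-, rfl, -⟩ | ⟨h2, rfl, hwV⟩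
            · rfl
            · exact absurd ⟨⟨h1, hvW⟩, ⟨h2, hwV⟩⟩ hnotboth
        have hfrlV : fmin (rl V) = fmin V - 1 := by rw [fmin_rl hα hV, if_neg h1]
        refine ⟨rl_card_two hα hV h1, ?_, by rw [hint, Finset.card_singleton], ?_, ?_⟩
        · -- 2 ≤ card (rl W)
          by_cases h2W : 1 ∈ W
          · have : rl W = W := if_pos h2W
            rw [this]
            apply Finset.one_lt_card.2
            refine ⟨1, h2W, fmin V - 1, hvW, ?_⟩
            exact (new_min_ne_one hα hV₀ h1V₀ h2V₀ hV h1).symm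
          · exact rl_card_two hα hW h2W
        · -- fmin (rl V) ≠ fmin (rl W)
          rw [hfrlV, fmin_rl hα hW]
          split
          · exact new_min_ne_one hα hV₀ h1V₀ h2V₀ hV h1
          · next h2W =>
            have := fmin_le hvW
            have hW2 := (fmin_ge_two hα hW h2W).1
            have hV2 := (fmin_ge_two hα hV h1).1
            omega
        · intro x hx
          rw [hint, Finset.mem_singleton] at hx
          exact Or.inl (hx.trans hfrlV.symm)
      · -- symmetric: intersection is {fmin W - 1}
        have hint : rl V ∩ rl W = {fmin W - 1} := by
          apply Finset.eq_singleton_iff_unique_mem.2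
          constructor
          · exact Finset.mem_inter.2 ⟨subset_rl hwV, mem_rl.2 (Or.inr ⟨h2, rfl⟩)⟩
          · intro x hx
            rcases hmem x hx with ⟨h1, rfl, hvW⟩ | ⟨-, rfl, -⟩
            · exact absurd ⟨⟨h1, hvW⟩, ⟨h2, hwV⟩⟩ hnotboth
            · rfl
        have hfrlW : fmin (rl W) = fmin W - 1 := by rw [fmin_rl hα hW, if_neg h2]
        refine ⟨?_, rl_card_two hα hW h2, by rw [hint, Finset.card_singleton], ?_, ?_⟩
        · by_cases h1V : 1 ∈ V
          · have : rl V = V := if_pos h1V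
            rw [this]
            apply Finset.one_lt_card.2
            refine ⟨1, h1V, fmin W - 1, hwV, ?_⟩
            exact (new_min_ne_one hα hV₀ h1V₀ h2V₀ hW h2).symm
          · exact rl_card_two hα hV h1V
        · rw [hfrlW, fmin_rl hα hV]
          split
          · exact (new_min_ne_one hα hV₀ h1V₀ h2V₀ hW h2).symm
          · next h1V =>
            have := fmin_le hwV
            have hW2 := (fmin_ge_two hα hW h2).1
            have hV2 := (fmin_ge_two hα hV h1V).1
            omega
        · intro x hx
          rw [hint, Finset.mem_singleton] at hx
          exact Or.inr (hx.trans hfrlW.symm)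
    · left
      push_neg at hcase
      apply Finset.eq_empty_of_forall_notMem
      intro x hx
      rcases hmem x hx with ⟨h1, rfl, hvW⟩ | ⟨h2, rfl, hwV⟩
      · exact hcase.1 h1 hvW
      · exact hcase.2 h2 hwV

end Alpha

end Relink

section Relink2

variable {n : ℕ} {α : Finset (Finset ℕ)}
variable (hα : IsNCPartition n α) {V₀ : Finset ℕ} (hV₀ : V₀ ∈ α) (h1V₀ : 1 ∈ V₀) (h2V₀ : 2 ∈ V₀)

include hα hV₀ h1V₀ h2V₀

lemma relink_noncrossing : ¬ IsCrossing (relink α) := by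
  rintro ⟨A, hA, B, hB, hne, a, ha, b, hb, c, hc, d, hd, h1, h2, h3⟩
  obtain ⟨V, hV, rfl⟩ := Finset.mem_image.1 hA
  obtain ⟨W, hW, rfl⟩ := Finset.mem_image.1 hB
  have hVW : V ≠ W := fun hh => hne (hh ▸ rfl)
  have hdisj : ∀ x, x ∈ V → x ∈ W → False := by
    intro x hx1 hx2
    exact hVW (blocks_eq_of_mem hα hV hW hx1 hx2)
  have hcV : c ∈ V := by
    rcases mem_rl.1 hc with hcc | ⟨h1V, rfl⟩
    · exact hcc
    · exfalso
      have hV2 := (fmin_ge_two hα hV h1V).1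
      rcases mem_rl.1 ha with haV | ⟨-, rfl⟩
      · have := fmin_le haV
        omega
      · omega
  have hdW : d ∈ W := by
    rcases mem_rl.1 hd with hdd | ⟨h1W, rfl⟩
    · exact hdd
    · exfalso
      have hW2 := (fmin_ge_two hα hW h1W).1
      rcases mem_rl.1 hb with hbW | ⟨-, rfl⟩
      · have := fmin_le hbW
        omega
      · omega
  apply hα.2
  rcases mem_rl.1 ha with haV | ⟨h1V, rfl⟩ <;> rcases mem_rl.1 hb with hbW | ⟨h1W, rfl⟩
  · exact ⟨V, hV, W, hW, hVW, a, haV, b, hbW, c, hcV, d, hdW, h1, h2, h3⟩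
  · -- b = fmin W - 1
    have hW2 := (fmin_ge_two hα hW h1W).1
    have hfW : fmin W ∈ W := fmin_mem (hα.1.1 W hW)
    have hfWc : fmin W ≠ c := fun hh => hdisj c (hh ▸ hcV) (hh ▸ hfW)
    refine ⟨V, hV, W, hW, hVW, a, haV, fmin W, hfW, c, hcV, d, hdW, by omega, ?_, h3⟩
    omega
  · -- a = fmin V - 1
    have hV2 := (fmin_ge_two hα hV h1V).1
    have hfV : fmin V ∈ V := fmin_mem (hα.1.1 V hV)
    have hfVb : fmin V ≠ b := fun hh => hdisj b (hh ▸ hfV) hbW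
    refine ⟨V, hV, W, hW, hVW, fmin V, hfV, b, hbW, c, hcV, d, hdW, ?_, h2, h3⟩
    omega
  · -- a = fmin V - 1, b = fmin W - 1
    have hV2 := (fmin_ge_two hα hV h1V).1
    have hW2 := (fmin_ge_two hα hW h1W).1
    have hfV : fmin V ∈ V := fmin_mem (hα.1.1 V hV)
    have hfW : fmin W ∈ W := fmin_mem (hα.1.1 W hW)
    have hfWc : fmin W ≠ c := fun hh => hdisj c (hh ▸ hcV) (hh ▸ hfW)
    refine ⟨V, hV, W, hW, hVW, fmin V, hfV, fmin W, hfW, c, hcV, d, hdW, by omega, ?_, h3⟩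
    omega

lemma relink_conn (hn : 1 ≤ n) : genPart (relink α) = {Finset.Icc 1 n} := by
  have hlinked := relink_linked hα hV₀ h1V₀ h2V₀
  have hsub' := hlinked.2.1
  have hcov' := hlinked.2.2.1
  apply genPart_eq_singleton hn hsub' hcov'
  have key : ∀ m, m ∈ Finset.Icc 1 n → Relation.EqvGen (relE (relink α)) m 1 := by
    intro m
    induction m using Nat.strong_induction_on with
    | _ m ih =>
      intro hm
      obtain ⟨V, hV, hmV⟩ := hα.1.2.2.1 m hm
      by_cases h1V : 1 ∈ V
      · exact Relation.EqvGen.rel _ _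
          ⟨rl V, Finset.mem_image_of_mem _ hV, subset_rl hmV, subset_rl h1V⟩
      · have hv : fmin V - 1 ∈ rl V := mem_rl.2 (Or.inr ⟨h1V, rfl⟩)
        have h2 := fmin_ge_two hα hV h1V
        have hlt : fmin V - 1 < m := by
          have := fmin_le hmV
          omega
        have hIcc : fmin V - 1 ∈ Finset.Icc 1 n := Finset.mem_Icc.2 ⟨by omega, by omega⟩
        exact Relation.EqvGen.trans _ _ _
          (Relation.EqvGen.rel _ _ ⟨rl V, Finset.mem_image_of_mem _ hV, subset_rl hmV, hv⟩)
          (ih _ hlt hIcc)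
  exact key


lemma unlink_relink : unlink (relink α) = α := by
  rw [unlink_eq_image, relink, Finset.image_image]
  have hid : ∀ V ∈ α, (uf (relink α) ∘ rl) V = V := by
    intro V hV
    by_cases h1V : 1 ∈ V
    · have hrlV : rl V = V := if_pos h1V
      have hfV : fmin V = 1 := fmin_one (hα.1.2.1 V hV) h1V
      have hs : SinglyCovered (relink α) 1 := by
        refine singly_covered_of_unique (Finset.mem_image_of_mem rl hV) (subset_rl h1V) ?_
        intro B hB h1B
        obtain ⟨W, hW, rfl⟩ := Finset.mem_image.1 hB
        rcases mem_rl.1 h1B with h1W | ⟨h1W, hw⟩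
        · rw [blocks_eq_of_mem hα hW hV h1W h1V, hrlV]
        · exact absurd hw.symm (new_min_ne_one hα hV₀ h1V₀ h2V₀ hW h1W)
      show uf (relink α) (rl V) = V
      rw [hrlV]
      unfold uf
      rw [hfV, if_pos hs]
    · have hrlV : rl V = insert (fmin V - 1) V := if_neg h1V
      have hfrl : fmin (rl V) = fmin V - 1 := by rw [fmin_rl hα hV, if_neg h1V]
      have h2 := fmin_ge_two hα hV h1V
      have hvIcc : fmin V - 1 ∈ Finset.Icc 1 n := Finset.mem_Icc.2 ⟨by omega, by omega⟩
      obtain ⟨U, hU, hvU⟩ := hα.1.2.2.1 _ hvIcc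
      have hUV : U ≠ V := by
        rintro rfl
        exact rlv_not_mem hα hU h1V hvU
      have hrlne : rl U ≠ rl V := fun hh => hUV (rl_inj hα hV₀ h1V₀ h2V₀ hU hV hh)
      have hns : ¬ SinglyCovered (relink α) (fmin V - 1) :=
        not_singly_covered (Finset.mem_image_of_mem rl hV) (Finset.mem_image_of_mem rl hU)
          hrlne.symm (mem_rl.2 (Or.inr ⟨h1V, rfl⟩)) (subset_rl hvU)
      show uf (relink α) (rl V) = V
      unfold uf
      rw [hfrl, if_neg hns, hrlV, Finset.erase_insert (rlv_not_mem hα hV h1V)]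
  calc α.image (uf (relink α) ∘ rl) = α.image id := Finset.image_congr fun V hV => hid V hV
  _ = α := Finset.image_id

end Relink2

section Final

variable {n : ℕ}

lemma relink_unlink {π : Finset (Finset ℕ)} (h : IsNCL n π) (hn : 1 ≤ n)
    (hconn : genPart π = {Finset.Icc 1 n}) : relink (unlink π) = π := by
  have h1Icc : (1 : ℕ) ∈ Finset.Icc 1 n := Finset.mem_Icc.2 ⟨le_rfl, hn⟩
  obtain ⟨A₁, hA₁, h1A₁⟩ := h.1.2.2.1 1 h1Icc
  rw [unlink_eq_image, relink, Finset.image_image]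
  have hid : ∀ A ∈ π, (rl ∘ uf π) A = A := by
    intro A hA
    have hAne := h.1.1 A hA
    show rl (uf π A) = A
    by_cases hs : SinglyCovered π (fmin A)
    · have huf : uf π A = A := by unfold uf; rw [if_pos hs]
      have h1A : 1 ∈ A := by
        by_contra h1A
        have hAA₁ : A ≠ A₁ := fun hh => h1A (hh ▸ h1A₁)
        obtain ⟨B, hB, hBA, hfB⟩ := min_doubly h hn hconn hA₁ h1A₁ A hA hAA₁
        exact not_singly_covered hA hB (Ne.symm hBA) (fmin_mem hAne) hfB hs
      rw [huf]
      unfold rl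
      rw [if_pos h1A]
    · have huf : uf π A = A.erase (fmin A) := by unfold uf; rw [if_neg hs]
      have h1e : 1 ∉ A.erase (fmin A) := by
        intro h1e
        have h1A : 1 ∈ A := Finset.mem_of_mem_erase h1e
        have hf1 : fmin A = 1 := fmin_one (h.1.2.1 A hA) h1A
        rw [hf1] at hs
        exact hs (singly_covered_one h hA h1A)
      obtain ⟨B, hB, hBA, hfB, -, hcA, -⟩ := not_singly_data h hA hAne hs
      have hm1 : fmin A + 1 ∈ A := gap_lemma h hconn hA hB hBA hfB
      have hfe : fmin (A.erase (fmin A)) = fmin A + 1 := by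
        apply fmin_eq (Finset.mem_erase.2 ⟨by omega, hm1⟩)
        intro x hx
        have hxA := fmin_le (Finset.mem_of_mem_erase hx)
        have := Finset.ne_of_mem_erase hx
        omega
      rw [huf]
      unfold rl
      rw [if_neg h1e, hfe]
      have : fmin A + 1 - 1 = fmin A := by omega
      rw [this, Finset.insert_erase (fmin_mem hAne)]
  calc π.image (rl ∘ uf π) = π.image id := Finset.image_congr fun A hA => hid A hA
  _ = π := Finset.image_id

end Final


/-- For every `n ≥ 2`, the map `π ↦ π̌` is a bijection from
`{π ∈ NCL(n) : π̂ = 1ₙ}` onto `{α ∈ NC(n) : 1 and 2 lie in the same block of α}`. -/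
theorem stmt10 (n : ℕ) (hn : 2 ≤ n) :
    Set.BijOn unlink
      {π : Finset (Finset ℕ) | IsNCL n π ∧ genPart π = {Finset.Icc 1 n}}
      {α : Finset (Finset ℕ) | IsNCPartition n α ∧ ∃ V ∈ α, 1 ∈ V ∧ 2 ∈ V} := by
  have hn1 : 1 ≤ n := by omega
  refine ⟨?_, ?_, ?_⟩
  · rintro π ⟨hπ, hconn⟩
    exact unlink_mem_T hπ hn hconn
  · rintro π₁ ⟨h1, hc1⟩ π₂ ⟨h2, hc2⟩ heq
    rw [← relink_unlink h1 hn1 hc1, heq, relink_unlink h2 hn1 hc2]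
  · rintro α ⟨hα, V₀, hV₀, h1V₀, h2V₀⟩
    refine ⟨relink α, ⟨⟨⟨relink_linked hα hV₀ h1V₀ h2V₀,
      relink_noncrossing hα hV₀ h1V₀ h2V₀⟩, relink_conn hα hV₀ h1V₀ h2V₀ hn1⟩,
      unlink_relink hα hV₀ h1V₀ h2V₀⟩⟩
end

section
/- For every positive integer n, the cardinality of {(α, β) : α, β ∈ NC(n), α ≪ β} equals Σ_{α ∈ NC(n)} 2^{i(α)}, where i(α) denotes the number of inner blocks of α; consequently Σ_{α ∈ NC(n)} 2^{i(α)} = Σ_{β ∈ NC(n)} ∏_{W block of β} Cat_{|W|−1}. -/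
open scoped Classical

namespace St12

open Finset

/-! ### fmin / fmax basics -/

lemma fmin_mem {A : Finset ℕ} (h : A.Nonempty) : fmin A ∈ A := by
  have := Nat.sInf_mem (s := (A : Set ℕ)) (by exact_mod_cast h.to_set)
  exact_mod_cast this

lemma fmin_le {A : Finset ℕ} {a : ℕ} (h : a ∈ A) : fmin A ≤ a :=
  Nat.sInf_le (by exact_mod_cast h)

lemma fmax_mem {A : Finset ℕ} (h : A.Nonempty) : fmax A ∈ A := by
  have := Nat.sSup_mem (s := (A : Set ℕ)) (by exact_mod_cast h.to_set) A.finite_toSet.bddAbove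
  exact_mod_cast this

lemma le_fmax {A : Finset ℕ} {a : ℕ} (h : a ∈ A) : a ≤ fmax A :=
  le_csSup A.finite_toSet.bddAbove (by exact_mod_cast h)

/-! ### partition basics -/

lemma part_eq_of_mem {F : Finset ℕ} {α : Finset (Finset ℕ)} (h : IsPartitionOfSet F α)
    {V W : Finset ℕ} {x : ℕ} (hV : V ∈ α) (hW : W ∈ α) (hxV : x ∈ V) (hxW : x ∈ W) :
    V = W := by
  by_contra hne
  have h2 := h.2.2.2 V hV W hW hne
  have : x ∈ V ∩ W := mem_inter.2 ⟨hxV, hxW⟩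
  rw [h2] at this
  exact absurd this (notMem_empty x)

lemma blockOf_eq {F : Finset ℕ} {α : Finset (Finset ℕ)} (h : IsPartitionOfSet F α)
    {V : Finset ℕ} {m : ℕ} (hV : V ∈ α) (hm : m ∈ V) : blockOf α m = V := by
  unfold blockOf
  have hf : α.filter (fun V => m ∈ V) = {V} := by
    ext W
    simp only [mem_filter, mem_singleton]
    constructor
    · rintro ⟨hW, hmW⟩; exact part_eq_of_mem h hW hV hmW hm
    · rintro rfl; exact ⟨hV, hm⟩
  rw [hf, Finset.sup_singleton]; rfl

/-- the unique block of a partition containing a given point of a set it contains -/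
lemma blockOf_mem {F : Finset ℕ} {α : Finset (Finset ℕ)} (h : IsPartitionOfSet F α)
    {m : ℕ} (hm : m ∈ F) : blockOf α m ∈ α ∧ m ∈ blockOf α m := by
  obtain ⟨V, hV, hmV⟩ := h.2.2.1 m hm
  rw [blockOf_eq h hV hmV]; exact ⟨hV, hmV⟩

/-! ### crossings -/

lemma cross_intro {π : Finset (Finset ℕ)} {A B : Finset ℕ} {a b c d : ℕ}
    (hA : A ∈ π) (hB : B ∈ π) (hne : A ≠ B)
    (ha : a ∈ A) (hb : b ∈ B) (hc : c ∈ A) (hd : d ∈ B)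
    (h1 : a < b) (h2 : b < c) (h3 : c < d) : IsCrossing π :=
  ⟨A, hA, B, hB, hne, a, ha, b, hb, c, hc, d, hd, h1, h2, h3⟩

lemma noncross_of_map {π π' : Finset (Finset ℕ)} (hnc : ¬ IsCrossing π')
    (g : Finset ℕ → Finset ℕ) (hsub : ∀ A ∈ π, A ⊆ g A ∧ g A ∈ π')
    (hinj : ∀ A ∈ π, ∀ B ∈ π, A ≠ B → g A ≠ g B) : ¬ IsCrossing π := by
  rintro ⟨A, hA, B, hB, hne, a, ha, b, hb, c, hc, d, hd, h1, h2, h3⟩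
  exact hnc ⟨g A, (hsub A hA).2, g B, (hsub B hB).2, hinj A hA B hB hne,
    a, (hsub A hA).1 ha, b, (hsub B hB).1 hb, c, (hsub A hA).1 hc, d, (hsub B hB).1 hd,
    h1, h2, h3⟩

lemma noncross_mono {π π' : Finset (Finset ℕ)} (hnc : ¬ IsCrossing π') (hsub : π ⊆ π') :
    ¬ IsCrossing π :=
  noncross_of_map hnc id (fun A hA => ⟨Finset.Subset.refl _, hsub hA⟩) (fun _ _ _ _ h => h)

/-- If one element of `V` lies strictly inside the span of another block `W`,
then all of `V` does. -/
lemma inside_of_mem_inside {F : Finset ℕ} {α : Finset (Finset ℕ)}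
    (h : IsPartitionOfSet F α) (hnc : ¬ IsCrossing α)
    {V W : Finset ℕ} (hV : V ∈ α) (hW : W ∈ α) (hne : V ≠ W)
    {x : ℕ} (hx : x ∈ V) (h1 : fmin W < x) (h2 : x < fmax W) :
    ∀ y ∈ V, fmin W < y ∧ y < fmax W := by
  have hWne : W.Nonempty := h.1 W hW
  have hminW : fmin W ∈ W := fmin_mem hWne
  have hmaxW : fmax W ∈ W := fmax_mem hWne
  intro y hy
  constructor
  · by_contra hlt
    push_neg at hlt
    have hyne : y ≠ fmin W := fun he => hne (part_eq_of_mem h hV hW hy (he ▸ hminW))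
    have hylt : y < fmin W := lt_of_le_of_ne hlt hyne
    -- pattern y < fmin W < x < fmax W : y, x ∈ V ; fmin W, fmax W ∈ W
    exact hnc (cross_intro hV hW hne hy hminW hx hmaxW hylt h1 h2)
  · by_contra hlt
    push_neg at hlt
    have hyne : y ≠ fmax W := fun he => hne (part_eq_of_mem h hV hW hy (he ▸ hmaxW))
    have hygt : fmax W < y := lt_of_le_of_ne hlt (Ne.symm hyne)
    -- pattern fmin W < x < fmax W < y : fmin W, fmax W ∈ W ; x, y ∈ V
    exact hnc (cross_intro hW hV (Ne.symm hne) hminW hx hmaxW hy h1 h2 hygt)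

/-- Trichotomy for distinct blocks of a non-crossing partition. -/
lemma trichotomy {F : Finset ℕ} {α : Finset (Finset ℕ)}
    (h : IsPartitionOfSet F α) (hnc : ¬ IsCrossing α)
    {V W : Finset ℕ} (hV : V ∈ α) (hW : W ∈ α) (hne : V ≠ W) :
    (∀ x ∈ W, fmin V < x ∧ x < fmax V) ∨ (∀ x ∈ V, fmin W < x ∧ x < fmax W) ∨
      (fmax V < fmin W ∨ fmax W < fmin V) := by
  have hVne : V.Nonempty := h.1 V hV
  have hWne : W.Nonempty := h.1 W hW
  rcases lt_or_ge (fmax V) (fmin W) with hd | hd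
  · exact Or.inr (Or.inr (Or.inl hd))
  rcases lt_or_ge (fmax W) (fmin V) with hd' | hd'
  · exact Or.inr (Or.inr (Or.inr hd'))
  -- spans overlap
  rcases lt_trichotomy (fmin V) (fmin W) with hm | hm | hm
  · -- claim fmin W < fmax V, then W strictly inside V
    have hmm : fmin W ≠ fmax V := by
      intro he
      apply hne
      apply part_eq_of_mem h hV hW (fmax_mem hVne)
      rw [← he]; exact fmin_mem hWne
    have hlt : fmin W < fmax V := lt_of_le_of_ne hd hmm
    exact Or.inl (inside_of_mem_inside h hnc hW hV (Ne.symm hne) (fmin_mem hWne) hm hlt)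
  · exfalso
    apply hne
    apply part_eq_of_mem h hV hW (fmin_mem hVne)
    rw [hm]; exact fmin_mem hWne
  · have hmm : fmin V ≠ fmax W := by
      intro he
      apply hne
      apply part_eq_of_mem h hV hW _ (fmax_mem hWne)
      rw [← he]; exact fmin_mem hVne
    have hlt : fmin V < fmax W := lt_of_le_of_ne hd' hmm
    exact Or.inr (Or.inl (inside_of_mem_inside h hnc hV hW hne (fmin_mem hVne) hm hlt))

/-! ### NCSet -/

/-- `NC(F)` as a finset, for an arbitrary finite `F ⊆ ℕ`. -/
noncomputable def NCSet (F : Finset ℕ) : Finset (Finset (Finset ℕ)) :=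
  F.powerset.powerset.filter (fun α => IsPartitionOfSet F α ∧ ¬ IsCrossing α)

lemma mem_NCSet {F : Finset ℕ} {α : Finset (Finset ℕ)} :
    α ∈ NCSet F ↔ IsPartitionOfSet F α ∧ ¬ IsCrossing α := by
  unfold NCSet
  rw [mem_filter, and_iff_right_iff_imp]
  intro hp
  rw [mem_powerset]
  intro V hV
  rw [mem_powerset]
  exact hp.1.2.1 V hV

lemma NCF_eq (n : ℕ) : NCF n = NCSet (Finset.Icc 1 n) := by
  ext α
  rw [mem_NCSet]
  unfold NCF
  rw [mem_filter]
  unfold IsNCPartition IsPartitionOf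
  constructor
  · rintro ⟨_, h⟩; exact h
  · intro h
    refine ⟨?_, h⟩
    rw [mem_powerset]
    intro V hV
    rw [mem_powerset]
    exact h.1.2.1 V hV

end St12
namespace St12
open Finset

/-- classifying value: the second-smallest element of the block of `f` (0 if block is `{f}`). -/
noncomputable def jval (f : ℕ) (α : Finset (Finset ℕ)) : ℕ :=
  if (blockOf α f).erase f = ∅ then 0 else fmin ((blockOf α f).erase f)

lemma jval_zero_iff {F : Finset ℕ} {α : Finset (Finset ℕ)} (h0 : 0 ∉ F) (hne : F.Nonempty)
    (hα : α ∈ NCSet F) : jval (fmin F) α = 0 ↔ ({fmin F} : Finset ℕ) ∈ α := by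
  obtain ⟨hp, _⟩ := mem_NCSet.1 hα
  have hf : fmin F ∈ F := fmin_mem hne
  obtain ⟨hB1, hfB1⟩ := blockOf_mem hp hf
  unfold jval
  by_cases he : (blockOf α (fmin F)).erase (fmin F) = ∅
  · rw [if_pos he]
    have hBsing : blockOf α (fmin F) = {fmin F} := by
      apply Finset.eq_singleton_iff_unique_mem.2
      refine ⟨hfB1, ?_⟩
      intro x hx
      by_contra hxf
      exact absurd (mem_erase.2 ⟨hxf, hx⟩) (by rw [he]; exact notMem_empty x)
    exact iff_of_true rfl (hBsing ▸ hB1)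
  · rw [if_neg he]
    have hne' : ((blockOf α (fmin F)).erase (fmin F)).Nonempty := nonempty_iff_ne_empty.2 he
    constructor
    · intro h
      exfalso
      have hmem := fmin_mem hne'
      have hmemF : fmin ((blockOf α (fmin F)).erase (fmin F)) ∈ F :=
        hp.2.1 _ hB1 (mem_of_mem_erase hmem)
      rw [h] at hmemF
      exact h0 hmemF
    · intro h
      have hb := blockOf_eq hp h (mem_singleton_self (fmin F))
      rw [hb] at he
      simp [Finset.erase_singleton] at he

lemma fiber0_card {F : Finset ℕ} (h0 : 0 ∉ F) (hne : F.Nonempty) :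
    ((NCSet F).filter (fun α => jval (fmin F) α = 0)).card = (NCSet (F.erase (fmin F))).card := by
  have hf : fmin F ∈ F := fmin_mem hne
  apply Finset.card_bij (fun α _ => α.erase {fmin F})
  · -- maps into
    intro α hα
    rw [mem_filter] at hα
    obtain ⟨hαNC, hj⟩ := hα
    obtain ⟨hp, hnc⟩ := mem_NCSet.1 hαNC
    have hsing : ({fmin F} : Finset ℕ) ∈ α := (jval_zero_iff h0 hne hαNC).1 hj
    rw [mem_NCSet]
    refine ⟨⟨?_, ?_, ?_, ?_⟩, noncross_mono hnc (erase_subset _ _)⟩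
    · intro V hV; exact hp.1 V (mem_of_mem_erase hV)
    · intro V hV x hx
      have hVα := mem_of_mem_erase hV
      refine mem_erase.2 ⟨?_, hp.2.1 V hVα hx⟩
      intro hxf
      exact (mem_erase.1 hV).1 (part_eq_of_mem hp hVα hsing hx (mem_singleton.2 hxf))
    · intro m hm
      obtain ⟨V, hV, hmV⟩ := hp.2.2.1 m (mem_of_mem_erase hm)
      refine ⟨V, mem_erase.2 ⟨?_, hV⟩, hmV⟩
      intro hVf
      apply (mem_erase.1 hm).1
      rw [hVf] at hmV; exact mem_singleton.1 hmV
    · intro V hV W hW hne'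
      exact hp.2.2.2 V (mem_of_mem_erase hV) W (mem_of_mem_erase hW) hne'
  · -- injective
    intro α₁ h₁ α₂ h₂ heq
    rw [mem_filter] at h₁ h₂
    have hs₁ : ({fmin F} : Finset ℕ) ∈ α₁ := (jval_zero_iff h0 hne h₁.1).1 h₁.2
    have hs₂ : ({fmin F} : Finset ℕ) ∈ α₂ := (jval_zero_iff h0 hne h₂.1).1 h₂.2
    rw [← Finset.insert_erase hs₁, ← Finset.insert_erase hs₂, heq]
  · -- surjective
    intro δ hδ
    obtain ⟨hp, hnc⟩ := mem_NCSet.1 hδ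
    have hfnot : ({fmin F} : Finset ℕ) ∉ δ := by
      intro hin
      have := hp.2.1 _ hin (mem_singleton_self (fmin F))
      exact (mem_erase.1 this).1 rfl
    have hins : insert {fmin F} δ ∈ NCSet F := by
      rw [mem_NCSet]
      constructor
      · refine ⟨?_, ?_, ?_, ?_⟩
        · intro V hV
          rcases mem_insert.1 hV with rfl | hV'
          · exact ⟨fmin F, mem_singleton_self _⟩
          · exact hp.1 V hV'
        · intro V hV
          rcases mem_insert.1 hV with rfl | hV'
          · intro x hx; rw [mem_singleton.1 hx]; exact hf
          · exact (hp.2.1 V hV').trans (erase_subset _ _)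
        · intro m hm
          by_cases hmf : m = fmin F
          · exact ⟨{fmin F}, mem_insert_self _ _, by rw [hmf]; exact mem_singleton_self _⟩
          · obtain ⟨V, hV, hmV⟩ := hp.2.2.1 m (mem_erase.2 ⟨hmf, hm⟩)
            exact ⟨V, mem_insert_of_mem hV, hmV⟩
        · intro V hV W hW hVW
          rcases mem_insert.1 hV with rfl | hV' <;> rcases mem_insert.1 hW with rfl | hW'
          · exact absurd rfl hVW
          · apply Finset.eq_empty_of_forall_notMem
            intro x hx
            rw [mem_inter, mem_singleton] at hx
            have hh := hp.2.1 W hW' hx.2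
            rw [hx.1] at hh
            exact (mem_erase.1 hh).1 rfl
          · apply Finset.eq_empty_of_forall_notMem
            intro x hx
            rw [mem_inter, mem_singleton] at hx
            have hh := hp.2.1 V hV' hx.1
            rw [hx.2] at hh
            exact (mem_erase.1 hh).1 rfl
          · exact hp.2.2.2 V hV' W hW' hVW
      · rintro ⟨A, hA, B, hB, hAB, a, ha, b, hb, c, hc, d, hd, h1, h2, h3⟩
        rcases mem_insert.1 hA with rfl | hA'
        · rw [mem_singleton] at ha hc; omega
        rcases mem_insert.1 hB with rfl | hB'
        · rw [mem_singleton] at hb hd; omega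
        exact hnc (cross_intro hA' hB' hAB ha hb hc hd h1 h2 h3)
    refine ⟨insert {fmin F} δ, ?_, ?_⟩
    · rw [mem_filter]
      exact ⟨hins, (jval_zero_iff h0 hne hins).2 (mem_insert_self _ _)⟩
    · rw [Finset.erase_insert hfnot]

end St12
namespace St12
open Finset

lemma subset_block_unique {F : Finset ℕ} {β : Finset (Finset ℕ)} (hp : IsPartitionOfSet F β)
    {V W W' : Finset ℕ} (hV : V.Nonempty) (hW : W ∈ β) (hW' : W' ∈ β)
    (h1 : V ⊆ W) (h2 : V ⊆ W') : W = W' := by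
  obtain ⟨x, hx⟩ := hV
  exact part_eq_of_mem hp hW hW' (h1 hx) (h2 hx)

lemma fiberj_card {F : Finset ℕ} {j : ℕ} (h0 : 0 ∉ F) (hne : F.Nonempty)
    (hj : j ∈ F.erase (fmin F)) :
    ((NCSet F).filter (fun α => jval (fmin F) α = j)).card
      = (NCSet (F.filter (fun x => fmin F < x ∧ x < j))).card
        * (NCSet (F.filter (fun x => j ≤ x))).card := by
  set f := fmin F with hfdef
  set G := F.filter (fun x => f < x ∧ x < j) with hGdef
  set H := F.filter (fun x => j ≤ x) with hHdef
  have hf : f ∈ F := fmin_mem hne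
  have hjF : j ∈ F := mem_of_mem_erase hj
  have hfj : f < j := lt_of_le_of_ne (fmin_le hjF) (Ne.symm (mem_erase.1 hj).1)
  have hjH : j ∈ H := mem_filter.2 ⟨hjF, le_refl j⟩
  have hmemG : ∀ x ∈ G, x ∈ F ∧ f < x ∧ x < j := fun x hx => mem_filter.1 hx
  have hmemH : ∀ x ∈ H, x ∈ F ∧ j ≤ x := fun x hx => mem_filter.1 hx
  have hfG : f ∉ G := fun h => absurd (hmemG f h).2.1 (lt_irrefl f)
  have hfH : f ∉ H := fun h => absurd (hmemH f h).2 (not_le.2 hfj)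
  have hGH : ∀ x, x ∈ G → x ∈ H → False := fun x hG hH =>
    absurd (hmemG x hG).2.2 (not_lt.2 (hmemH x hH).2)
  have hGF : G ⊆ F := filter_subset _ _
  have hHF : H ⊆ F := filter_subset _ _
  have hfmin : ∀ x ∈ F, f ≤ x := fun x hx => fmin_le hx
  -- key facts about a partition in the fiber
  have key : ∀ α, α ∈ NCSet F → jval f α = j →
      blockOf α f ∈ α ∧ f ∈ blockOf α f ∧ j ∈ blockOf α f ∧
        (∀ x ∈ blockOf α f, x ≠ f → j ≤ x) ∧
        (∀ V ∈ α, V ≠ blockOf α f → V ⊆ G ∨ V ⊆ H) := by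
    intro α hα hjv
    obtain ⟨hp, hnc⟩ := mem_NCSet.1 hα
    obtain ⟨hB1, hfB1⟩ := blockOf_mem hp hf
    have hj0 : j ≠ 0 := fun h => h0 (h ▸ hjF)
    unfold jval at hjv
    by_cases he : (blockOf α f).erase f = ∅
    · rw [if_pos he] at hjv; exact absurd hjv.symm hj0
    rw [if_neg he] at hjv
    have hne' : ((blockOf α f).erase f).Nonempty := nonempty_iff_ne_empty.2 he
    have hjB1 : j ∈ blockOf α f := by
      have := fmin_mem hne'
      rw [hjv] at this
      exact mem_of_mem_erase this
    have hminp : ∀ x ∈ blockOf α f, x ≠ f → j ≤ x := by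
      intro x hx hxf
      have := fmin_le (mem_erase.2 ⟨hxf, hx⟩)
      rw [hjv] at this
      exact this
    refine ⟨hB1, hfB1, hjB1, hminp, ?_⟩
    intro V hV hVB1
    by_cases hVH : V ⊆ H
    · exact Or.inr hVH
    left
    rw [hHdef] at hVH
    have : ∃ x ∈ V, x < j := by
      by_contra hcon
      push_neg at hcon
      exact hVH (fun x hx => mem_filter.2 ⟨hp.2.1 V hV hx, hcon x hx⟩)
    obtain ⟨x, hxV, hxj⟩ := this
    have hxF : x ∈ F := hp.2.1 V hV hxV
    have hxf : x ≠ f := by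
      intro h
      exact hVB1 (part_eq_of_mem hp hV hB1 (h ▸ hxV) hfB1)
    have hfx : f < x := lt_of_le_of_ne (hfmin x hxF) (Ne.symm hxf)
    intro y hyV
    have hyF : y ∈ F := hp.2.1 V hV hyV
    have hyf : y ≠ f := by
      intro h
      exact hVB1 (part_eq_of_mem hp hV hB1 (h ▸ hyV) hfB1)
    have hfy : f < y := lt_of_le_of_ne (hfmin y hyF) (Ne.symm hyf)
    refine mem_filter.2 ⟨hyF, hfy, ?_⟩
    by_contra hyj
    push_neg at hyj
    have hyj' : j < y := by
      rcases lt_or_eq_of_le hyj with h | h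
      · exact h
      · exact absurd (part_eq_of_mem hp hV hB1 (h ▸ hyV) hjB1) hVB1
    exact hnc (cross_intro hB1 hV (Ne.symm hVB1) hfB1 hxV hjB1 hyV hfx hxj hyj')
  -- forward map lands in the product
  have fwd : ∀ α, α ∈ NCSet F → jval f α = j →
      α.filter (fun V => V ⊆ G) ∈ NCSet G ∧
      insert ((blockOf α f).erase f) (α.filter (fun V => V ⊆ H)) ∈ NCSet H := by
    intro α hα hjv
    obtain ⟨hp, hnc⟩ := mem_NCSet.1 hα
    obtain ⟨hB1, hfB1, hjB1, hminp, hsplit⟩ := key α hα hjv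
    constructor
    · rw [mem_NCSet]
      refine ⟨⟨?_, ?_, ?_, ?_⟩, noncross_mono hnc (filter_subset _ _)⟩
      · intro V hV; exact hp.1 V (mem_filter.1 hV).1
      · intro V hV; exact (mem_filter.1 hV).2
      · intro m hm
        obtain ⟨V, hV, hmV⟩ := hp.2.2.1 m (hGF hm)
        have hVB1 : V ≠ blockOf α f := by
          intro h
          rcases eq_or_ne m f with rfl | hmf
          · exact hfG hm
          · exact absurd (hmemG m hm).2.2 (not_lt.2 (hminp m (h ▸ hmV) hmf))
        rcases hsplit V hV hVB1 with hsub | hsub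
        · exact ⟨V, mem_filter.2 ⟨hV, hsub⟩, hmV⟩
        · exact absurd (hGH m hm (hsub hmV)) id
      · intro V hV W hW hVW
        exact hp.2.2.2 V (mem_filter.1 hV).1 W (mem_filter.1 hW).1 hVW
    · rw [mem_NCSet]
      have hBH : (blockOf α f).erase f ⊆ H := by
        intro x hx
        exact mem_filter.2 ⟨hp.2.1 _ hB1 (mem_of_mem_erase hx),
          hminp x (mem_of_mem_erase hx) (mem_erase.1 hx).1⟩
      have hjBe : j ∈ (blockOf α f).erase f := mem_erase.2 ⟨fun h => absurd hfj (h ▸ lt_irrefl f), hjB1⟩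
      have hfilH : ∀ V ∈ α.filter (fun V => V ⊆ H), V ∈ α ∧ V ⊆ H ∧ V ≠ blockOf α f := by
        intro V hV
        obtain ⟨hVα, hVH⟩ := mem_filter.1 hV
        refine ⟨hVα, hVH, ?_⟩
        intro h
        exact hfH (hVH (h ▸ hfB1))
      constructor
      · refine ⟨?_, ?_, ?_, ?_⟩
        · intro V hV
          rcases mem_insert.1 hV with rfl | hV'
          · exact ⟨j, hjBe⟩
          · exact hp.1 V (mem_filter.1 hV').1
        · intro V hV
          rcases mem_insert.1 hV with rfl | hV'
          · exact hBH
          · exact (mem_filter.1 hV').2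
        · intro m hm
          obtain ⟨hmF, hjm⟩ := hmemH m hm
          obtain ⟨V, hV, hmV⟩ := hp.2.2.1 m hmF
          by_cases hVB : V = blockOf α f
          · refine ⟨(blockOf α f).erase f, mem_insert_self _ _, mem_erase.2 ⟨?_, hVB ▸ hmV⟩⟩
            intro h
            exact absurd hjm (by rw [h]; exact not_le.2 hfj)
          · rcases hsplit V hV hVB with hsub | hsub
            · exact absurd (hGH m (hsub hmV) hm) id
            · exact ⟨V, mem_insert_of_mem (mem_filter.2 ⟨hV, hsub⟩), hmV⟩
        · intro V hV W hW hVW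
          apply eq_empty_of_forall_notMem
          intro x hx
          obtain ⟨hxV, hxW⟩ := mem_inter.1 hx
          rcases mem_insert.1 hV with rfl | hV' <;> rcases mem_insert.1 hW with rfl | hW'
          · exact hVW rfl
          · obtain ⟨hWα, _, hWB⟩ := hfilH W hW'
            have : (blockOf α f) ∩ W = ∅ := hp.2.2.2 _ hB1 W hWα (Ne.symm hWB)
            have hmm : x ∈ blockOf α f ∩ W := mem_inter.2 ⟨mem_of_mem_erase hxV, hxW⟩
            rw [this] at hmm; exact notMem_empty x hmm
          · obtain ⟨hVα, _, hVB⟩ := hfilH V hV'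
            have : (blockOf α f) ∩ V = ∅ := hp.2.2.2 _ hB1 V hVα (Ne.symm hVB)
            have hmm : x ∈ blockOf α f ∩ V := mem_inter.2 ⟨mem_of_mem_erase hxW, hxV⟩
            rw [this] at hmm; exact notMem_empty x hmm
          · have := hp.2.2.2 V (mem_filter.1 hV').1 W (mem_filter.1 hW').1 hVW
            have hmm : x ∈ V ∩ W := mem_inter.2 ⟨hxV, hxW⟩
            rw [this] at hmm; exact notMem_empty x hmm
      · apply noncross_of_map hnc (fun A => if A = (blockOf α f).erase f then blockOf α f else A)
        · intro A hA
          by_cases hAB : A = (blockOf α f).erase f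
          · rw [if_pos hAB, hAB]; exact ⟨erase_subset _ _, hB1⟩
          · rw [if_neg hAB]
            rcases mem_insert.1 hA with h | h
            · exact absurd h hAB
            · exact ⟨Finset.Subset.refl _, (mem_filter.1 h).1⟩
        · intro A hA B hB hAB
          by_cases hA' : A = (blockOf α f).erase f <;> by_cases hB' : B = (blockOf α f).erase f
          · exact absurd (hA'.trans hB'.symm) hAB
          · rw [if_pos hA', if_neg hB']
            rcases mem_insert.1 hB with h | h
            · exact absurd h hB'
            · exact Ne.symm (hfilH B h).2.2
          · rw [if_neg hA', if_pos hB']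
            rcases mem_insert.1 hA with h | h
            · exact absurd h hA'
            · exact (hfilH A h).2.2
          · rw [if_neg hA', if_neg hB']; exact hAB
  -- reconstruction
  have recon : ∀ α, α ∈ NCSet F → jval f α = j → ∀ γ ε,
      γ = α.filter (fun V => V ⊆ G) →
      ε = insert ((blockOf α f).erase f) (α.filter (fun V => V ⊆ H)) →
      insert (insert f (blockOf ε j)) (γ ∪ ε.erase (blockOf ε j)) = α := by
    intro α hα hjv γ ε hγ hε
    obtain ⟨hp, hnc⟩ := mem_NCSet.1 hα
    obtain ⟨hB1, hfB1, hjB1, hminp, hsplit⟩ := key α hα hjv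
    have hεNC := (fwd α hα hjv).2
    rw [← hε] at hεNC
    obtain ⟨hεp, _⟩ := mem_NCSet.1 hεNC
    have hjBe : j ∈ (blockOf α f).erase f :=
      mem_erase.2 ⟨fun h => absurd hfj (h ▸ lt_irrefl f), hjB1⟩
    have hCB : blockOf ε j = (blockOf α f).erase f := by
      apply blockOf_eq hεp _ hjBe
      rw [hε]; exact mem_insert_self _ _
    have hBne : (blockOf α f).erase f ∉ α.filter (fun V => V ⊆ H) := by
      intro hin
      have hinα := (mem_filter.1 hin).1
      have hne1 : (blockOf α f).erase f ≠ blockOf α f := by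
        intro h
        have := h ▸ hfB1
        exact (mem_erase.1 this).1 rfl
      have hd := hp.2.2.2 _ hinα _ hB1 hne1
      have : j ∈ (blockOf α f).erase f ∩ blockOf α f := mem_inter.2 ⟨hjBe, hjB1⟩
      rw [hd] at this; exact notMem_empty j this
    have hins : insert f (blockOf ε j) = blockOf α f := by
      rw [hCB]; exact Finset.insert_erase hfB1
    have herase : ε.erase (blockOf ε j) = α.filter (fun V => V ⊆ H) := by
      rw [hCB, hε]; exact Finset.erase_insert hBne
    rw [hins, herase, hγ]
    ext V
    constructor
    · intro hV
      rcases mem_insert.1 hV with rfl | hV'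
      · exact hB1
      rcases mem_union.1 hV' with h | h
      · exact (mem_filter.1 h).1
      · exact (mem_filter.1 h).1
    · intro hV
      by_cases hVB : V = blockOf α f
      · rw [hVB]; exact mem_insert_self _ _
      rcases hsplit V hV hVB with h | h
      · exact mem_insert_of_mem (mem_union_left _ (mem_filter.2 ⟨hV, h⟩))
      · exact mem_insert_of_mem (mem_union_right _ (mem_filter.2 ⟨hV, h⟩))
  -- backward map
  have bwd : ∀ γ ε, γ ∈ NCSet G → ε ∈ NCSet H →
      insert (insert f (blockOf ε j)) (γ ∪ ε.erase (blockOf ε j)) ∈ NCSet F ∧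
      jval f (insert (insert f (blockOf ε j)) (γ ∪ ε.erase (blockOf ε j))) = j ∧
      (insert (insert f (blockOf ε j)) (γ ∪ ε.erase (blockOf ε j))).filter (fun V => V ⊆ G) = γ ∧
      insert ((blockOf (insert (insert f (blockOf ε j)) (γ ∪ ε.erase (blockOf ε j))) f).erase f)
        ((insert (insert f (blockOf ε j)) (γ ∪ ε.erase (blockOf ε j))).filter (fun V => V ⊆ H)) = ε := by
    intro γ ε hγ hε
    obtain ⟨hγp, hγnc⟩ := mem_NCSet.1 hγ
    obtain ⟨hεp, hεnc⟩ := mem_NCSet.1 hε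
    obtain ⟨hC, hjC⟩ := blockOf_mem hεp hjH
    set C := blockOf ε j with hCdef
    set A := insert (insert f C) (γ ∪ ε.erase C) with hAdef
    have hCH : C ⊆ H := hεp.2.1 C hC
    have hfC : f ∉ C := fun h => hfH (hCH h)
    have hmemA : ∀ V, V ∈ A ↔ V = insert f C ∨ V ∈ γ ∨ V ∈ ε.erase C := by
      intro V
      rw [hAdef]
      simp only [mem_insert, mem_union]
    -- disjointness of all pairs
    have hdisj : ∀ V, (V = insert f C ∨ V ∈ γ ∨ V ∈ ε.erase C) →
        ∀ W, (W = insert f C ∨ W ∈ γ ∨ W ∈ ε.erase C) → V ≠ W →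
        ∀ x, x ∈ V → x ∈ W → False := by
      have base : ∀ x, x ∈ insert f C → ∀ W, (W ∈ γ ∨ W ∈ ε.erase C) → x ∈ W → False := by
        intro x hx W hW hxW
        rcases mem_insert.1 hx with rfl | hxC
        · rcases hW with h | h
          · exact hfG (hγp.2.1 W h hxW)
          · exact hfH (hεp.2.1 W (mem_of_mem_erase h) hxW)
        · rcases hW with h | h
          · exact hGH x (hγp.2.1 W h hxW) (hCH hxC)
          · have hd := hεp.2.2.2 C hC W (mem_of_mem_erase h) (Ne.symm (mem_erase.1 h).1)
            have : x ∈ C ∩ W := mem_inter.2 ⟨hxC, hxW⟩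
            rw [hd] at this; exact notMem_empty x this
      intro V hV W hW hVW x hxV hxW
      rcases hV with rfl | hV' <;> rcases hW with rfl | hW'
      · exact hVW rfl
      · exact base x hxV W hW' hxW
      · exact base x hxW V hV' hxV
      · rcases hV' with h1 | h1 <;> rcases hW' with h2 | h2
        · have hd := hγp.2.2.2 V h1 W h2 hVW
          have : x ∈ V ∩ W := mem_inter.2 ⟨hxV, hxW⟩
          rw [hd] at this; exact notMem_empty x this
        · exact hGH x (hγp.2.1 V h1 hxV) (hεp.2.1 W (mem_of_mem_erase h2) hxW)
        · exact hGH x (hγp.2.1 W h2 hxW) (hεp.2.1 V (mem_of_mem_erase h1) hxV)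
        · have hd := hεp.2.2.2 V (mem_of_mem_erase h1) W (mem_of_mem_erase h2) hVW
          have : x ∈ V ∩ W := mem_inter.2 ⟨hxV, hxW⟩
          rw [hd] at this; exact notMem_empty x this
    have hpA : IsPartitionOfSet F A := by
      refine ⟨?_, ?_, ?_, ?_⟩
      · intro V hV
        rcases (hmemA V).1 hV with rfl | h | h
        · exact ⟨f, mem_insert_self _ _⟩
        · exact hγp.1 V h
        · exact hεp.1 V (mem_of_mem_erase h)
      · intro V hV
        rcases (hmemA V).1 hV with rfl | h | h
        · intro x hx
          rcases mem_insert.1 hx with rfl | hx'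
          · exact hf
          · exact hHF (hCH hx')
        · exact (hγp.2.1 V h).trans hGF
        · exact (hεp.2.1 V (mem_of_mem_erase h)).trans hHF
      · intro m hm
        rcases eq_or_ne m f with rfl | hmf
        · exact ⟨insert f C, (hmemA _).2 (Or.inl rfl), mem_insert_self _ _⟩
        have hfm : f < m := lt_of_le_of_ne (hfmin m hm) (Ne.symm hmf)
        rcases lt_or_ge m j with hmj | hmj
        · obtain ⟨V, hV, hmV⟩ := hγp.2.2.1 m (mem_filter.2 ⟨hm, hfm, hmj⟩)
          exact ⟨V, (hmemA _).2 (Or.inr (Or.inl hV)), hmV⟩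
        · obtain ⟨V, hV, hmV⟩ := hεp.2.2.1 m (mem_filter.2 ⟨hm, hmj⟩)
          by_cases hVC : V = C
          · exact ⟨insert f C, (hmemA _).2 (Or.inl rfl), mem_insert_of_mem (hVC ▸ hmV)⟩
          · exact ⟨V, (hmemA _).2 (Or.inr (Or.inr (mem_erase.2 ⟨hVC, hV⟩))), hmV⟩
      · intro V hV W hW hVW
        apply eq_empty_of_forall_notMem
        intro x hx
        obtain ⟨h1, h2⟩ := mem_inter.1 hx
        exact hdisj V ((hmemA V).1 hV) W ((hmemA W).1 hW) hVW x h1 h2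
    have hncA : ¬ IsCrossing A := by
      rintro ⟨V, hV, W, hW, hVW, a, ha, b, hb, c, hc, d, hd, h1, h2, h3⟩
      have hGlt : ∀ x ∈ G, f < x ∧ x < j := fun x hx => (hmemG x hx).2
      have hHge : ∀ x ∈ H, j ≤ x := fun x hx => (hmemH x hx).2
      rcases (hmemA V).1 hV with rfl | hVγ | hVε <;> rcases (hmemA W).1 hW with rfl | hWγ | hWε
      · exact hVW rfl
      · -- V = insert f C, W ∈ γ : b, d ∈ G, c ∈ insert f C
        have hbG := hGlt b (hγp.2.1 W hWγ hb)
        have hdG := hGlt d (hγp.2.1 W hWγ hd)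
        rcases mem_insert.1 hc with rfl | hcC
        · omega
        · have := hHge c (hCH hcC); omega
      · -- V = insert f C, W ∈ ε.erase C
        have hWε' := mem_of_mem_erase hWε
        have hWC : W ≠ C := (mem_erase.1 hWε).1
        have hbH := hHge b (hεp.2.1 W hWε' hb)
        have hcC : c ∈ C := by
          rcases mem_insert.1 hc with rfl | h
          · omega
          · exact h
        have hdC : d ∈ W := hd
        rcases mem_insert.1 ha with rfl | haC
        · -- a = f, use j instead
          rcases lt_or_eq_of_le hbH with hjb | hjb
          · exact hεnc (cross_intro hC hWε' (Ne.symm hWC) hjC hb hcC hd hjb h2 h3)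
          · exact absurd (part_eq_of_mem hεp hWε' hC hb (hjb ▸ hjC)) hWC
        · exact hεnc (cross_intro hC hWε' (Ne.symm hWC) haC hb hcC hd h1 h2 h3)
      · -- V ∈ γ, W = insert f C
        have haG := hGlt a (hγp.2.1 V hVγ ha)
        have hcG := hGlt c (hγp.2.1 V hVγ hc)
        rcases mem_insert.1 hb with rfl | hbC
        · omega
        · have := hHge b (hCH hbC); omega
      · exact hγnc (cross_intro hVγ hWγ hVW ha hb hc hd h1 h2 h3)
      · -- V ∈ γ, W ∈ ε.erase C
        have haG := hGlt a (hγp.2.1 V hVγ ha)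
        have hcG := hGlt c (hγp.2.1 V hVγ hc)
        have hbH := hHge b (hεp.2.1 W (mem_of_mem_erase hWε) hb)
        omega
      · -- V ∈ ε.erase C, W = insert f C
        have hVε' := mem_of_mem_erase hVε
        have hVC : V ≠ C := (mem_erase.1 hVε).1
        have haH := hHge a (hεp.2.1 V hVε' ha)
        have hbC : b ∈ C := by
          rcases mem_insert.1 hb with rfl | h
          · omega
          · exact h
        have hdC : d ∈ C := by
          rcases mem_insert.1 hd with rfl | h
          · omega
          · exact h
        exact hεnc (cross_intro hVε' hC hVC ha hbC hc hdC h1 h2 h3)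
      · -- V ∈ ε.erase C, W ∈ γ
        have haH := hHge a (hεp.2.1 V (mem_of_mem_erase hVε) ha)
        have hbG := hGlt b (hγp.2.1 W hWγ hb)
        omega
      · exact hεnc (cross_intro (mem_of_mem_erase hVε) (mem_of_mem_erase hWε)
          hVW ha hb hc hd h1 h2 h3)
    have hANC : A ∈ NCSet F := mem_NCSet.2 ⟨hpA, hncA⟩
    have hBA : blockOf A f = insert f C :=
      blockOf_eq hpA ((hmemA _).2 (Or.inl rfl)) (mem_insert_self _ _)
    have hjvA : jval f A = j := by
      unfold jval
      rw [hBA, Finset.erase_insert hfC]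
      have hCne : C ≠ ∅ := fun h => notMem_empty j (h ▸ hjC)
      rw [if_neg hCne]
      apply le_antisymm (fmin_le hjC)
      have := fmin_mem (nonempty_iff_ne_empty.2 hCne)
      exact (hmemH _ (hCH this)).2
    refine ⟨hANC, hjvA, ?_, ?_⟩
    · -- filter G recovers γ
      ext V
      simp only [mem_filter]
      constructor
      · rintro ⟨hVA, hVG⟩
        rcases (hmemA V).1 hVA with rfl | h | h
        · exact absurd (hVG (mem_insert_self f C)) hfG
        · exact h
        · obtain ⟨x, hx⟩ := hεp.1 V (mem_of_mem_erase h)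
          exact absurd (hGH x (hVG hx) (hεp.2.1 V (mem_of_mem_erase h) hx)) id
      · intro hV
        exact ⟨(hmemA V).2 (Or.inr (Or.inl hV)), hγp.2.1 V hV⟩
    · -- insert/filter H recovers ε
      rw [hBA, Finset.erase_insert hfC]
      have hfilH : A.filter (fun V => V ⊆ H) = ε.erase C := by
        ext V
        simp only [mem_filter]
        constructor
        · rintro ⟨hVA, hVH⟩
          rcases (hmemA V).1 hVA with rfl | h | h
          · exact absurd (hVH (mem_insert_self f C)) hfH
          · obtain ⟨x, hx⟩ := hγp.1 V h
            exact absurd (hGH x (hγp.2.1 V h hx) (hVH hx)) id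
          · exact h
        · intro hV
          exact ⟨(hmemA V).2 (Or.inr (Or.inr hV)), hεp.2.1 V (mem_of_mem_erase hV)⟩
      rw [hfilH, Finset.insert_erase hC]
  -- now the bijection
  rw [← Finset.card_product]
  apply Finset.card_bij (fun α _ =>
    (α.filter (fun V => V ⊆ G), insert ((blockOf α f).erase f) (α.filter (fun V => V ⊆ H))))
  · intro α hα
    rw [mem_filter] at hα
    obtain ⟨h1, h2⟩ := fwd α hα.1 hα.2
    exact mem_product.2 ⟨h1, h2⟩
  · intro α₁ hα₁ α₂ hα₂ heq
    rw [mem_filter] at hα₁ hα₂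
    rw [Prod.mk.injEq] at heq
    have r1 := recon α₁ hα₁.1 hα₁.2 _ _ heq.1.symm heq.2.symm
    have r2 := recon α₂ hα₂.1 hα₂.2 _ _ rfl rfl
    exact r1.symm.trans r2
  · intro p hp
    obtain ⟨hpγ, hpε⟩ := mem_product.1 hp
    obtain ⟨hANC, hjvA, hrec1, hrec2⟩ := bwd p.1 p.2 hpγ hpε
    refine ⟨_, mem_filter.2 ⟨hANC, hjvA⟩, ?_⟩
    rw [hrec1, hrec2]
end St12
namespace St12
open Finset

lemma NCSet_empty : NCSet (∅ : Finset ℕ) = {∅} := by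
  ext α
  rw [mem_NCSet, mem_singleton]
  constructor
  · rintro ⟨hp, _⟩
    apply Finset.eq_empty_of_forall_notMem
    intro V hV
    obtain ⟨x, hx⟩ := hp.1 V hV
    exact notMem_empty x (hp.2.1 V hV hx)
  · rintro rfl
    refine ⟨⟨?_, ?_, ?_, ?_⟩, ?_⟩
    · intro V hV; exact absurd hV (notMem_empty V)
    · intro V hV; exact absurd hV (notMem_empty V)
    · intro m hm; exact absurd hm (notMem_empty m)
    · intro V hV; exact absurd hV (notMem_empty V)
    · rintro ⟨A, hA, _⟩; exact notMem_empty A hA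

lemma cardNC_aux (N : ℕ) : ∀ F : Finset ℕ, F.card ≤ N → 0 ∉ F →
    (NCSet F).card = catalan F.card := by
  induction N with
  | zero =>
    intro F hcard h0
    have hF : F = ∅ := card_eq_zero.1 (Nat.le_zero.1 hcard)
    subst hF
    rw [NCSet_empty]
    simp
  | succ N ih =>
    intro F hcard h0
    rcases F.eq_empty_or_nonempty with rfl | hne
    · rw [NCSet_empty]; simp
    set f := fmin F with hfdef
    have hf : f ∈ F := fmin_mem hne
    set k := (F.erase f).card with hkdef
    have hcardpos : 0 < F.card := card_pos.2 hne
    have hek : (F.erase f).card = F.card - 1 := card_erase_of_mem hf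
    have hFk : F.card = k + 1 := by omega
    have h0' : (0:ℕ) ∉ F.erase f := fun h => h0 (mem_of_mem_erase h)
    have hfib : ∀ α ∈ NCSet F, jval f α ∈ insert 0 (F.erase f) := by
      intro α hα
      obtain ⟨hp, _⟩ := mem_NCSet.1 hα
      obtain ⟨hB1, hfB1⟩ := blockOf_mem hp hf
      unfold jval
      by_cases he : (blockOf α f).erase f = ∅
      · rw [if_pos he]; exact mem_insert_self 0 _
      · rw [if_neg he]
        apply mem_insert_of_mem
        have hm := fmin_mem (nonempty_iff_ne_empty.2 he)
        exact mem_erase.2 ⟨(mem_erase.1 hm).1, hp.2.1 _ hB1 (mem_of_mem_erase hm)⟩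
    rw [Finset.card_eq_sum_card_fiberwise hfib, Finset.sum_insert h0']
    -- fiber at 0
    have e0 : ((NCSet F).filter (fun α => jval f α = 0)).card = catalan k := by
      have t := fiber0_card h0 hne
      rw [← hfdef] at t
      rw [t, ih (F.erase f) (by omega) h0', ← hkdef]
    -- card facts for j-fibers
    have hcards : ∀ j ∈ F.erase f,
        (F.filter (fun x => f < x ∧ x < j)).card + (F.filter (fun x => j ≤ x)).card = k ∧
        0 < (F.filter (fun x => j ≤ x)).card := by
      intro j hj
      have hjF : j ∈ F := mem_of_mem_erase hj
      have hfj : f < j := lt_of_le_of_ne (fmin_le hjF) (Ne.symm (mem_erase.1 hj).1)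
      have hdisj : Disjoint (F.filter (fun x => f < x ∧ x < j)) (F.filter (fun x => j ≤ x)) := by
        rw [Finset.disjoint_left]
        intro x h1 h2
        have := (mem_filter.1 h1).2.2
        have := (mem_filter.1 h2).2
        omega
      have hunion : F.filter (fun x => f < x ∧ x < j) ∪ F.filter (fun x => j ≤ x) = F.erase f := by
        ext x
        simp only [mem_union, mem_filter, mem_erase]
        constructor
        · rintro (⟨hxF, hfx, _⟩ | ⟨hxF, hjx⟩)
          · exact ⟨by omega, hxF⟩
          · exact ⟨by omega, hxF⟩
        · rintro ⟨hxf, hxF⟩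
          have hfx : f < x := lt_of_le_of_ne (fmin_le hxF) (Ne.symm hxf)
          rcases lt_or_ge x j with h | h
          · exact Or.inl ⟨hxF, hfx, h⟩
          · exact Or.inr ⟨hxF, h⟩
      constructor
      · rw [← Finset.card_union_of_disjoint hdisj, hunion]
      · exact card_pos.2 ⟨j, mem_filter.2 ⟨hjF, le_refl j⟩⟩
    -- fibers at j
    have ej : ∀ j ∈ F.erase f, ((NCSet F).filter (fun α => jval f α = j)).card
        = catalan (F.filter (fun x => f < x ∧ x < j)).card
          * catalan (k - (F.filter (fun x => f < x ∧ x < j)).card) := by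
      intro j hj
      have t := fiberj_card h0 hne (hfdef ▸ hj)
      rw [← hfdef] at t
      have hG0 : (0:ℕ) ∉ F.filter (fun x => f < x ∧ x < j) := fun h => h0 (mem_filter.1 h).1
      have hH0 : (0:ℕ) ∉ F.filter (fun x => j ≤ x) := fun h => h0 (mem_filter.1 h).1
      obtain ⟨hsum, hpos⟩ := hcards j hj
      rw [t, ih _ (by omega) hG0, ih _ (by omega) hH0]
      congr 2
      omega
    rw [e0, Finset.sum_congr rfl ej]
    -- reindex the sum
    have hinj : Set.InjOn (fun j => (F.filter (fun x => f < x ∧ x < j)).card) ↑(F.erase f) := by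
      intro j1 h1 j2 h2 heq
      have h1' : j1 ∈ F.erase f := h1
      have h2' : j2 ∈ F.erase f := h2
      by_contra hne12
      have key : ∀ a b : ℕ, a ∈ F.erase f → b ∈ F.erase f → a < b →
          (F.filter (fun x => f < x ∧ x < a)).card < (F.filter (fun x => f < x ∧ x < b)).card := by
        intro a b ha hb hab
        apply Finset.card_lt_card
        have hss : F.filter (fun x => f < x ∧ x < a) ⊆ F.filter (fun x => f < x ∧ x < b) := by
          intro x hx
          rw [mem_filter] at hx ⊢
          exact ⟨hx.1, hx.2.1, hx.2.2.trans hab⟩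
        rw [Finset.ssubset_iff_of_subset hss]
        refine ⟨a, mem_filter.2 ⟨mem_of_mem_erase ha, ?_, hab⟩, ?_⟩
        · exact lt_of_le_of_ne (fmin_le (mem_of_mem_erase ha)) (Ne.symm (mem_erase.1 ha).1)
        · intro hcon
          exact absurd (mem_filter.1 hcon).2.2 (lt_irrefl a)
      rcases lt_or_gt_of_ne hne12 with hlt | hlt
      · exact absurd heq (Nat.ne_of_lt (key j1 j2 h1' h2' hlt))
      · exact absurd heq.symm (Nat.ne_of_lt (key j2 j1 h2' h1' hlt))
    have hmaps : ∀ j ∈ F.erase f, (F.filter (fun x => f < x ∧ x < j)).card ∈ Finset.range k := by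
      intro j hj
      obtain ⟨hsum, hpos⟩ := hcards j hj
      rw [mem_range]; omega
    have himg : (F.erase f).image (fun j => (F.filter (fun x => f < x ∧ x < j)).card)
        = Finset.range k := by
      apply Finset.eq_of_subset_of_card_le
      · intro y hy
        obtain ⟨j, hjm, rfl⟩ := mem_image.1 hy
        exact hmaps j hjm
      · rw [Finset.card_range, Finset.card_image_of_injOn hinj]
    have hre := Finset.sum_nbij (s := F.erase f) (t := Finset.range k)
      (f := fun j => catalan (F.filter (fun x => f < x ∧ x < j)).card
          * catalan (k - (F.filter (fun x => f < x ∧ x < j)).card))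
      (g := fun i => catalan i * catalan (k - i))
      (fun j => (F.filter (fun x => f < x ∧ x < j)).card)
      hmaps hinj
      (by intro x hx
          rw [← Finset.coe_image, himg]
          exact hx)
      (fun j hj => rfl)
    rw [hre, hFk, catalan_succ k,
      Fin.sum_univ_eq_sum_range (fun i => catalan i * catalan (k - i)) (k+1),
      Finset.sum_range_succ]
    simp only [Nat.sub_self, catalan_zero, mul_one]
    exact Nat.add_comm _ _

lemma cardNC (F : Finset ℕ) (h0 : 0 ∉ F) : (NCSet F).card = catalan F.card :=
  cardNC_aux F.card F le_rfl h0

end St12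
namespace St12
open Finset

lemma NCSet_singleton (x : ℕ) : NCSet {x} = {{{x}}} := by
  ext α
  rw [mem_NCSet, mem_singleton]
  constructor
  · rintro ⟨hp, _⟩
    have hall : ∀ V ∈ α, V = {x} := by
      intro V hV
      obtain ⟨y, hy⟩ := hp.1 V hV
      have hsub := hp.2.1 V hV
      apply Finset.Subset.antisymm hsub
      intro z hz
      rw [mem_singleton.1 hz, ← mem_singleton.1 (hsub hy)]
      exact hy
    obtain ⟨V, hV, hxV⟩ := hp.2.2.1 x (mem_singleton_self x)
    rw [← hall V hV]
    apply Finset.eq_singleton_iff_unique_mem.2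
    exact ⟨hV, fun W hW => (hall W hW).trans (hall V hV).symm⟩
  · rintro rfl
    refine ⟨⟨?_, ?_, ?_, ?_⟩, ?_⟩
    · intro V hV; rw [mem_singleton.1 hV]; exact ⟨x, mem_singleton_self x⟩
    · intro V hV; rw [mem_singleton.1 hV]
    · intro m hm; exact ⟨{x}, mem_singleton_self _, hm⟩
    · intro V hV W hW hVW
      rw [mem_singleton.1 hV, mem_singleton.1 hW] at hVW
      exact absurd rfl hVW
    · rintro ⟨A, hA, B, hB, hAB, _⟩
      rw [mem_singleton.1 hA, mem_singleton.1 hB] at hAB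
      exact absurd rfl hAB

lemma cardSpan (W : Finset ℕ) (h0 : 0 ∉ W) (hne : W.Nonempty) :
    ((NCSet W).filter (fun γ => ∃ B ∈ γ, fmin W ∈ B ∧ fmax W ∈ B)).card
      = catalan (W.card - 1) := by
  by_cases hc1 : W.card = 1
  · obtain ⟨x, rfl⟩ := Finset.card_eq_one.1 hc1
    have hminx : fmin {x} = x := mem_singleton.1 (fmin_mem ⟨x, mem_singleton_self x⟩)
    have hmaxx : fmax {x} = x := mem_singleton.1 (fmax_mem ⟨x, mem_singleton_self x⟩)
    rw [NCSet_singleton x]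
    have hft : Finset.filter (fun γ => ∃ B ∈ γ, fmin {x} ∈ B ∧ fmax {x} ∈ B)
        ({{{x}}} : Finset (Finset (Finset ℕ))) = {{{x}}} := by
      apply Finset.filter_true_of_mem
      intro γ hγ
      rw [mem_singleton.1 hγ]
      exact ⟨{x}, mem_singleton_self _, by rw [hminx]; exact mem_singleton_self x,
        by rw [hmaxx]; exact mem_singleton_self x⟩
    rw [hft]
    simp
  have hc2 : 2 ≤ W.card := by
    have := card_pos.2 hne; omega
  set M := fmax W with hMdef
  set μ := fmin W with hμdef
  have hMW : M ∈ W := fmax_mem hne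
  have hμW : μ ∈ W := fmin_mem hne
  have hμM : μ < M := by
    rcases lt_or_eq_of_le (le_fmax hμW) with h | h
    · exact h
    · exfalso
      have hsub : W ⊆ {μ} := by
        intro x hx
        rw [mem_singleton]
        have h1 := fmin_le hx
        have h2 := le_fmax hx
        omega
      have := card_le_card hsub
      rw [card_singleton] at this
      omega
  have h0' : (0:ℕ) ∉ W.erase M := fun h => h0 (mem_of_mem_erase h)
  have hμe : μ ∈ W.erase M := mem_erase.2 ⟨Nat.ne_of_lt hμM, hμW⟩
  rw [← card_erase_of_mem hMW, ← cardNC (W.erase M) h0']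
  apply Finset.card_bij (fun γ _ => γ.image (fun B => B.erase M))
  · -- maps into NCSet (W.erase M)
    intro γ hγ
    rw [mem_filter] at hγ
    obtain ⟨hγNC, B0, hB0, hμB0, hMB0⟩ := hγ
    obtain ⟨hp, hnc⟩ := mem_NCSet.1 hγNC
    have hMuni : ∀ B ∈ γ, M ∈ B → B = B0 := fun B hB hMB => part_eq_of_mem hp hB hB0 hMB hMB0
    have herase : ∀ B ∈ γ, B ≠ B0 → B.erase M = B := by
      intro B hB hBne
      apply Finset.erase_eq_of_notMem
      intro hMB
      exact hBne (hMuni B hB hMB)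
    rw [mem_NCSet]
    refine ⟨⟨?_, ?_, ?_, ?_⟩, ?_⟩
    · intro V hV
      obtain ⟨B, hB, rfl⟩ := mem_image.1 hV
      by_cases hBB : B = B0
      · subst hBB
        exact ⟨μ, mem_erase.2 ⟨Nat.ne_of_lt hμM, hμB0⟩⟩
      · rw [herase B hB hBB]; exact hp.1 B hB
    · intro V hV
      obtain ⟨B, hB, rfl⟩ := mem_image.1 hV
      intro x hx
      exact mem_erase.2 ⟨(mem_erase.1 hx).1, hp.2.1 B hB (mem_of_mem_erase hx)⟩
    · intro m hm
      obtain ⟨B, hB, hmB⟩ := hp.2.2.1 m (mem_of_mem_erase hm)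
      exact ⟨B.erase M, mem_image_of_mem _ hB, mem_erase.2 ⟨(mem_erase.1 hm).1, hmB⟩⟩
    · intro V hV V' hV' hne'
      obtain ⟨B, hB, rfl⟩ := mem_image.1 hV
      obtain ⟨B', hB', rfl⟩ := mem_image.1 hV'
      have hBB' : B ≠ B' := fun h => hne' (by rw [h])
      apply eq_empty_of_forall_notMem
      intro x hx
      obtain ⟨h1, h2⟩ := mem_inter.1 hx
      have hd := hp.2.2.2 B hB B' hB' hBB'
      have : x ∈ B ∩ B' := mem_inter.2 ⟨mem_of_mem_erase h1, mem_of_mem_erase h2⟩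
      rw [hd] at this; exact notMem_empty x this
    · rintro ⟨V, hV, V', hV', hne', a, ha, b, hb, c, hc, d, hd, h1, h2, h3⟩
      obtain ⟨B, hB, rfl⟩ := mem_image.1 hV
      obtain ⟨B', hB', rfl⟩ := mem_image.1 hV'
      have hBB' : B ≠ B' := fun h => hne' (by rw [h])
      exact hnc (cross_intro hB hB' hBB' (mem_of_mem_erase ha) (mem_of_mem_erase hb)
        (mem_of_mem_erase hc) (mem_of_mem_erase hd) h1 h2 h3)
  · -- injective
    have recov : ∀ γ, γ ∈ (NCSet W).filter (fun γ => ∃ B ∈ γ, fmin W ∈ B ∧ fmax W ∈ B) →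
        (γ.image (fun B => B.erase M)).image (fun V => if μ ∈ V then insert M V else V) = γ := by
      intro γ hγ
      rw [mem_filter] at hγ
      obtain ⟨hγNC, B0, hB0, hμB0, hMB0⟩ := hγ
      obtain ⟨hp, hnc⟩ := mem_NCSet.1 hγNC
      rw [Finset.image_image]
      have : ∀ B ∈ γ, (fun V => if μ ∈ V then insert M V else V) (B.erase M) = B := by
        intro B hB
        by_cases hBB : B = B0
        · subst hBB
          simp only
          rw [if_pos (mem_erase.2 ⟨Nat.ne_of_lt hμM, hμB0⟩)]
          exact Finset.insert_erase hMB0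
        · have hMB : M ∉ B := fun hMB => hBB (part_eq_of_mem hp hB hB0 hMB hMB0)
          have hμB : μ ∉ B := fun hμB => hBB (part_eq_of_mem hp hB hB0 hμB hμB0)
          rw [Finset.erase_eq_of_notMem hMB]
          simp only
          rw [if_neg hμB]
      calc γ.image _ = γ.image id := Finset.image_congr this
        _ = γ := Finset.image_id
    intro γ₁ h₁ γ₂ h₂ heq
    rw [← recov γ₁ h₁, ← recov γ₂ h₂, heq]
  · -- surjective
    intro δ hδ
    obtain ⟨hδp, hδnc⟩ := mem_NCSet.1 hδ
    obtain ⟨hBμ, hμBμ⟩ := blockOf_mem hδp hμe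
    set Bμ := blockOf δ μ with hBμdef
    have hMnot : ∀ V ∈ δ, M ∉ V := fun V hV hMV => (mem_erase.1 (hδp.2.1 V hV hMV)).1 rfl
    have hμuni : ∀ V ∈ δ, μ ∈ V → V = Bμ := fun V hV hμV => part_eq_of_mem hδp hV hBμ hμV hμBμ
    refine ⟨δ.image (fun V => if μ ∈ V then insert M V else V), ?_, ?_⟩
    · rw [mem_filter]
      have hMmem : ∀ V ∈ δ, ∀ x, x ∈ (if μ ∈ V then insert M V else V) → x = M ∨ x ∈ V := by
        intro V hV x hx
        by_cases hμV : μ ∈ V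
        · rw [if_pos hμV] at hx
          rcases mem_insert.1 hx with rfl | h
          · exact Or.inl rfl
          · exact Or.inr h
        · rw [if_neg hμV] at hx; exact Or.inr hx
      have hsubm : ∀ V ∈ δ, V ⊆ (if μ ∈ V then insert M V else V) := by
        intro V hV x hx
        by_cases hμV : μ ∈ V
        · rw [if_pos hμV]; exact mem_insert_of_mem hx
        · rw [if_neg hμV]; exact hx
      have hMonly : ∀ V ∈ δ, M ∈ (if μ ∈ V then insert M V else V) → V = Bμ := by
        intro V hV hM
        rcases hMmem V hV M hM with _ | h
        · by_cases hμV : μ ∈ V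
          · exact hμuni V hV hμV
          · rw [if_neg hμV] at hM; exact absurd hM (hMnot V hV)
        · exact absurd h (hMnot V hV)
      have hpart : IsPartitionOfSet W (δ.image (fun V => if μ ∈ V then insert M V else V)) := by
        refine ⟨?_, ?_, ?_, ?_⟩
        · intro V' hV'
          obtain ⟨V, hV, rfl⟩ := mem_image.1 hV'
          obtain ⟨y, hy⟩ := hδp.1 V hV
          exact ⟨y, hsubm V hV hy⟩
        · intro V' hV'
          obtain ⟨V, hV, rfl⟩ := mem_image.1 hV'
          intro x hx
          rcases hMmem V hV x hx with rfl | h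
          · exact hMW
          · exact mem_of_mem_erase (hδp.2.1 V hV h)
        · intro m hm
          rcases eq_or_ne m M with rfl | hmM
          · refine ⟨insert M Bμ, ?_, mem_insert_self _ _⟩
            rw [mem_image]
            exact ⟨Bμ, hBμ, by rw [if_pos hμBμ]⟩
          · obtain ⟨V, hV, hmV⟩ := hδp.2.2.1 m (mem_erase.2 ⟨hmM, hm⟩)
            exact ⟨_, mem_image_of_mem _ hV, hsubm V hV hmV⟩
        · intro V' hV' W' hW' hne'
          obtain ⟨V, hV, rfl⟩ := mem_image.1 hV'
          obtain ⟨U, hU, rfl⟩ := mem_image.1 hW'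
          have hVU : V ≠ U := fun h => hne' (by rw [h])
          apply eq_empty_of_forall_notMem
          intro x hx
          obtain ⟨h1, h2⟩ := mem_inter.1 hx
          rcases hMmem V hV x h1 with rfl | hxV
          · have e1 := hMonly V hV h1
            have e2 := hMonly U hU h2
            exact hVU (e1.trans e2.symm)
          · rcases hMmem U hU x h2 with rfl | hxU
            · exact hMnot V hV hxV
            · have hd := hδp.2.2.2 V hV U hU hVU
              have : x ∈ V ∩ U := mem_inter.2 ⟨hxV, hxU⟩
              rw [hd] at this; exact notMem_empty x this
      refine ⟨mem_NCSet.2 ⟨hpart, ?_⟩, ?_⟩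
      · -- noncrossing
        rintro ⟨V', hV', W', hW', hne', a, ha, b, hb, c, hc, d, hd, h1, h2, h3⟩
        obtain ⟨V, hV, rfl⟩ := mem_image.1 hV'
        obtain ⟨U, hU, rfl⟩ := mem_image.1 hW'
        have hVU : V ≠ U := fun h => hne' (by rw [h])
        have hdW : d ∈ W := hpart.2.1 _ (mem_image_of_mem _ hU) hd
        have hdM : d ≤ M := le_fmax hdW
        have haV : a ∈ V := by
          rcases hMmem V hV a ha with rfl | h; · omega
          · exact h
        have hbU : b ∈ U := by
          rcases hMmem U hU b hb with rfl | h; · omega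
          · exact h
        have hcV : c ∈ V := by
          rcases hMmem V hV c hc with rfl | h; · omega
          · exact h
        rcases hMmem U hU d hd with rfl | hdU
        · -- d = M, so U = Bμ
          have hUBμ := hMonly U hU hd
          subst hUBμ
          have hμa : μ ≤ a := fmin_le (mem_of_mem_erase (hδp.2.1 V hV haV))
          rcases lt_or_eq_of_le hμa with h | h
          · exact hδnc (cross_intro hBμ hV (fun hh => hVU hh.symm) hμBμ haV hbU hcV h h1 h2)
          · exact hVU (part_eq_of_mem hδp hV hBμ (h ▸ haV) hμBμ)
        · exact hδnc (cross_intro hV hU hVU haV hbU hcV hdU h1 h2 h3)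
      · -- span property
        refine ⟨insert M Bμ, ?_, ?_, ?_⟩
        · rw [mem_image]; exact ⟨Bμ, hBμ, by rw [if_pos hμBμ]⟩
        · exact mem_insert_of_mem hμBμ
        · exact mem_insert_self _ _
    · -- round trip
      rw [Finset.image_image]
      have : ∀ V ∈ δ, ((fun V => if μ ∈ V then insert M V else V) V).erase M = V := by
        intro V hV
        by_cases hμV : μ ∈ V
        · simp only
          rw [if_pos hμV]
          exact Finset.erase_insert (hMnot V hV)
        · simp only
          rw [if_neg hμV]
          exact Finset.erase_eq_of_notMem (hMnot V hV)
      calc δ.image _ = δ.image id := Finset.image_congr this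
        _ = δ := Finset.image_id
end St12
namespace St12
open Finset

lemma claimB {n : ℕ} {β : Finset (Finset ℕ)} (hβ : β ∈ NCSet (Finset.Icc 1 n)) :
    ((NCSet (Finset.Icc 1 n)).filter (fun a => LL a β)).card
      = ∏ W ∈ β, catalan (W.card - 1) := by
  obtain ⟨hβp, hβnc⟩ := mem_NCSet.1 hβ
  have hW0 : ∀ W ∈ β, (0:ℕ) ∉ W := by
    intro W hW h
    have := hβp.2.1 W hW h
    rw [Finset.mem_Icc] at this
    omega
  have step2 : ∏ W ∈ β, ((NCSet W).filter (fun γ => ∃ B ∈ γ, fmin W ∈ B ∧ fmax W ∈ B)).card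
      = ∏ W ∈ β, catalan (W.card - 1) :=
    Finset.prod_congr rfl (fun W hW => cardSpan W (hW0 W hW) (hβp.1 W hW))
  rw [← step2, ← Finset.card_pi]
  apply Finset.card_bij (fun a _ => fun W (_ : W ∈ β) => a.filter (fun V => V ⊆ W))
  · -- maps into the pi set
    intro a ha
    rw [mem_filter] at ha
    obtain ⟨haNC, href, hspan⟩ := ha
    obtain ⟨hap, hanc⟩ := mem_NCSet.1 haNC
    rw [Finset.mem_pi]
    intro W hW
    rw [mem_filter]
    have hfil : ∀ V ∈ a, V ⊆ W → V ∈ a.filter (fun V => V ⊆ W) :=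
      fun V hV hVW => mem_filter.2 ⟨hV, hVW⟩
    constructor
    · rw [mem_NCSet]
      refine ⟨⟨?_, ?_, ?_, ?_⟩, noncross_mono hanc (filter_subset _ _)⟩
      · intro V hV; exact hap.1 V (mem_filter.1 hV).1
      · intro V hV; exact (mem_filter.1 hV).2
      · intro m hm
        obtain ⟨V, hV, hmV⟩ := hap.2.2.1 m (hβp.2.1 W hW hm)
        obtain ⟨W', hW', hVW'⟩ := href V hV
        have : W' = W := part_eq_of_mem hβp hW' hW (hVW' hmV) hm
        subst this
        exact ⟨V, hfil V hV hVW', hmV⟩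
      · intro V hV V' hV' hne'
        exact hap.2.2.2 V (mem_filter.1 hV).1 V' (mem_filter.1 hV').1 hne'
    · obtain ⟨B, hB, hmin, hmax⟩ := hspan W hW
      obtain ⟨W', hW', hBW'⟩ := href B hB
      have : W' = W := part_eq_of_mem hβp hW' hW (hBW' hmin) (fmin_mem (hβp.1 W hW))
      subst this
      exact ⟨B, hfil B hB hBW', hmin, hmax⟩
  · -- injective
    intro a₁ h₁ a₂ h₂ heq
    rw [mem_filter] at h₁ h₂
    have key : ∀ a₁ a₂, a₁ ∈ NCSet (Finset.Icc 1 n) → LL a₁ β →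
        (∀ W (hW : W ∈ β), a₁.filter (fun V => V ⊆ W) = a₂.filter (fun V => V ⊆ W)) →
        a₁ ⊆ a₂ := by
      intro a₁ a₂ hNC hLL hfeq V hV
      obtain ⟨W, hW, hVW⟩ := hLL.1 V hV
      have : V ∈ a₁.filter (fun V => V ⊆ W) := mem_filter.2 ⟨hV, hVW⟩
      rw [hfeq W hW] at this
      exact (mem_filter.1 this).1
    have hfeq : ∀ W (hW : W ∈ β), a₁.filter (fun V => V ⊆ W) = a₂.filter (fun V => V ⊆ W) :=
      fun W hW => congrFun (congrFun heq W) hW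
    apply Finset.Subset.antisymm
    · exact key a₁ a₂ h₁.1 h₁.2 hfeq
    · exact key a₂ a₁ h₂.1 h₂.2 (fun W hW => (hfeq W hW).symm)
  · -- surjective
    intro p hp
    rw [Finset.mem_pi] at hp
    have hp' : ∀ W (hW : W ∈ β), p W hW ∈ NCSet W ∧
        ∃ B ∈ p W hW, fmin W ∈ B ∧ fmax W ∈ B := by
      intro W hW
      have := hp W hW
      rw [mem_filter] at this
      exact this
    set a : Finset (Finset ℕ) := β.attach.biUnion (fun W => p W.1 W.2) with hadef
    have hmema : ∀ V, V ∈ a ↔ ∃ W, ∃ hW : W ∈ β, V ∈ p W hW := by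
      intro V
      rw [hadef, Finset.mem_biUnion]
      constructor
      · rintro ⟨⟨W, hW⟩, _, h⟩; exact ⟨W, hW, h⟩
      · rintro ⟨W, hW, h⟩; exact ⟨⟨W, hW⟩, mem_attach _ _, h⟩
    have hsubW : ∀ W (hW : W ∈ β), ∀ V ∈ p W hW, V ⊆ W :=
      fun W hW V hV => ((hp' W hW).1 |> mem_NCSet.1).1.2.1 V hV
    have hWuni : ∀ W (hW : W ∈ β) W' (hW' : W' ∈ β), ∀ V, V ∈ p W hW → V ∈ p W' hW' → W = W' := by
      intro W hW W' hW' V hV hV'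
      obtain ⟨x, hx⟩ := ((hp' W hW).1 |> mem_NCSet.1).1.1 V hV
      exact part_eq_of_mem hβp hW hW' (hsubW W hW V hV hx) (hsubW W' hW' V hV' hx)
    have haNC : a ∈ NCSet (Finset.Icc 1 n) := by
      rw [mem_NCSet]
      constructor
      · refine ⟨?_, ?_, ?_, ?_⟩
        · intro V hV
          obtain ⟨W, hW, h⟩ := (hmema V).1 hV
          exact ((hp' W hW).1 |> mem_NCSet.1).1.1 V h
        · intro V hV
          obtain ⟨W, hW, h⟩ := (hmema V).1 hV
          exact (hsubW W hW V h).trans (hβp.2.1 W hW)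
        · intro m hm
          obtain ⟨W, hW, hmW⟩ := hβp.2.2.1 m hm
          obtain ⟨V, hV, hmV⟩ := ((hp' W hW).1 |> mem_NCSet.1).1.2.2.1 m hmW
          exact ⟨V, (hmema V).2 ⟨W, hW, hV⟩, hmV⟩
        · intro V hV V' hV' hne'
          obtain ⟨W, hW, h⟩ := (hmema V).1 hV
          obtain ⟨W', hW', h'⟩ := (hmema V').1 hV'
          by_cases hWW : W = W'
          · subst hWW
            exact ((hp' W hW).1 |> mem_NCSet.1).1.2.2.2 V h V' h' hne'
          · apply eq_empty_of_forall_notMem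
            intro x hx
            obtain ⟨h1, h2⟩ := mem_inter.1 hx
            have hd := hβp.2.2.2 W hW W' hW' hWW
            have : x ∈ W ∩ W' := mem_inter.2 ⟨hsubW W hW V h h1, hsubW W' hW' V' h' h2⟩
            rw [hd] at this; exact notMem_empty x this
      · rintro ⟨V, hV, V', hV', hne', x1, hx1, x2, hx2, x3, hx3, x4, hx4, hl1, hl2, hl3⟩
        obtain ⟨W, hW, h⟩ := (hmema V).1 hV
        obtain ⟨W', hW', h'⟩ := (hmema V').1 hV'
        by_cases hWW : W = W'
        · subst hWW
          exact ((hp' W hW).1 |> mem_NCSet.1).2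
            ⟨V, h, V', h', hne', x1, hx1, x2, hx2, x3, hx3, x4, hx4, hl1, hl2, hl3⟩
        · exact hβnc (cross_intro hW hW' hWW (hsubW W hW V h hx1) (hsubW W' hW' V' h' hx2)
            (hsubW W hW V h hx3) (hsubW W' hW' V' h' hx4) hl1 hl2 hl3)
    have haLL : LL a β := by
      constructor
      · intro V hV
        obtain ⟨W, hW, h⟩ := (hmema V).1 hV
        exact ⟨W, hW, hsubW W hW V h⟩
      · intro W hW
        obtain ⟨B, hB, hmin, hmax⟩ := (hp' W hW).2
        exact ⟨B, (hmema B).2 ⟨W, hW, hB⟩, hmin, hmax⟩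
    refine ⟨a, mem_filter.2 ⟨haNC, haLL⟩, ?_⟩
    funext W hW
    ext V
    rw [mem_filter]
    constructor
    · rintro ⟨hVa, hVW⟩
      obtain ⟨W', hW', h'⟩ := (hmema V).1 hVa
      obtain ⟨x, hx⟩ := ((hp' W' hW').1 |> mem_NCSet.1).1.1 V h'
      have : W' = W := part_eq_of_mem hβp hW' hW (hsubW W' hW' V h' hx) (hVW hx)
      subst this
      exact h'
    · intro hV
      exact ⟨(hmema V).2 ⟨W, hW, hV⟩, hsubW W hW V hV⟩
end St12
namespace St12
open Finset

noncomputable def encl (α : Finset (Finset ℕ)) (V : Finset ℕ) : Finset (Finset ℕ) :=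
  α.filter (fun V' => fmin V' < fmin V ∧ fmax V < fmax V')

lemma mem_encl {α : Finset (Finset ℕ)} {V B : Finset ℕ} :
    B ∈ encl α V ↔ B ∈ α ∧ fmin B < fmin V ∧ fmax V < fmax B := by
  unfold encl; rw [mem_filter]

lemma not_outer_iff {α : Finset (Finset ℕ)} {V : Finset ℕ} :
    ¬ OuterBlock α V ↔ (encl α V).Nonempty := by
  unfold OuterBlock
  push_neg
  constructor
  · rintro ⟨V', hV', h⟩; exact ⟨V', mem_encl.2 ⟨hV', h⟩⟩
  · rintro ⟨V', hV'⟩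
    obtain ⟨h1, h2⟩ := mem_encl.1 hV'
    exact ⟨V', h1, h2⟩

noncomputable def anchor (α S : Finset (Finset ℕ)) (V : Finset ℕ) : Finset ℕ :=
  blockOf α (fmax (((insert V (encl α V)).filter (fun B => B ∉ S)).image fmin))

lemma exists_notS {F : Finset ℕ} {α S : Finset (Finset ℕ)} (hp : IsPartitionOfSet F α)
    (hS : S ⊆ α.filter (fun V => ¬ OuterBlock α V)) :
    ∀ N, ∀ V ∈ α, fmin V ≤ N → ∃ B ∈ insert V (encl α V), B ∉ S := by
  intro N
  induction N with
  | zero =>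
    intro V hV hle
    by_cases hVS : V ∈ S
    · obtain ⟨E, hE⟩ := not_outer_iff.1 (mem_filter.1 (hS hVS)).2
      have := (mem_encl.1 hE).2.1
      omega
    · exact ⟨V, mem_insert_self _ _, hVS⟩
  | succ N ih =>
    intro V hV hle
    by_cases hVS : V ∈ S
    · obtain ⟨E, hE⟩ := not_outer_iff.1 (mem_filter.1 (hS hVS)).2
      obtain ⟨hEα, hE1, hE2⟩ := mem_encl.1 hE
      obtain ⟨B, hB, hBS⟩ := ih E hEα (by omega)
      refine ⟨B, ?_, hBS⟩
      rcases mem_insert.1 hB with rfl | hB'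
      · exact mem_insert_of_mem hE
      · obtain ⟨hBα, h1, h2⟩ := mem_encl.1 hB'
        exact mem_insert_of_mem (mem_encl.2 ⟨hBα, by omega, by omega⟩)
    · exact ⟨V, mem_insert_self _ _, hVS⟩

lemma anchor_spec {F : Finset ℕ} {α S : Finset (Finset ℕ)} (hp : IsPartitionOfSet F α)
    (hS : S ⊆ α.filter (fun V => ¬ OuterBlock α V)) {V : Finset ℕ} (hV : V ∈ α) :
    anchor α S V ∈ insert V (encl α V) ∧ anchor α S V ∉ S ∧
      ∀ B ∈ insert V (encl α V), B ∉ S → fmin B ≤ fmin (anchor α S V) := by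
  obtain ⟨B1, hB1, hB1S⟩ := exists_notS hp hS (fmin V) V hV le_rfl
  set T := (insert V (encl α V)).filter (fun B => B ∉ S) with hTdef
  have hTne : T.Nonempty := ⟨B1, mem_filter.2 ⟨hB1, hB1S⟩⟩
  have himg : (T.image fmin).Nonempty := hTne.image _
  have hmax := fmax_mem himg
  obtain ⟨B0, hB0T, hB0eq⟩ := mem_image.1 hmax
  obtain ⟨hB0mem, hB0S⟩ := mem_filter.1 hB0T
  have hB0α : B0 ∈ α := by
    rcases mem_insert.1 hB0mem with rfl | h
    · exact hV
    · exact (mem_encl.1 h).1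
  have heq : anchor α S V = B0 := by
    unfold anchor
    rw [← hTdef, ← hB0eq]
    exact blockOf_eq hp hB0α (fmin_mem (hp.1 B0 hB0α))
  rw [heq]
  refine ⟨hB0mem, hB0S, ?_⟩
  intro B hB hBS
  rw [← hB0eq] at hmax
  calc fmin B ≤ fmax (T.image fmin) := le_fmax (mem_image_of_mem fmin (mem_filter.2 ⟨hB, hBS⟩))
    _ = fmin B0 := hB0eq.symm ▸ rfl

lemma anchor_mem {F : Finset ℕ} {α S : Finset (Finset ℕ)} (hp : IsPartitionOfSet F α)
    (hS : S ⊆ α.filter (fun V => ¬ OuterBlock α V)) {V : Finset ℕ} (hV : V ∈ α) :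
    anchor α S V ∈ α := by
  rcases mem_insert.1 (anchor_spec hp hS hV).1 with h | h
  · rw [h]; exact hV
  · exact (mem_encl.1 h).1

lemma anchor_fix {F : Finset ℕ} {α S : Finset (Finset ℕ)} (hp : IsPartitionOfSet F α)
    (hS : S ⊆ α.filter (fun V => ¬ OuterBlock α V)) {A : Finset ℕ} (hA : A ∈ α)
    (hAS : A ∉ S) : anchor α S A = A := by
  obtain ⟨hmem, _, hmax⟩ := anchor_spec hp hS hA
  rcases mem_insert.1 hmem with h | h
  · exact h
  · exfalso
    have h1 := (mem_encl.1 h).2.1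
    have h2 := hmax A (mem_insert_self _ _) hAS
    omega

lemma anchor_interval {F : Finset ℕ} {α S : Finset (Finset ℕ)} (hp : IsPartitionOfSet F α)
    (hS : S ⊆ α.filter (fun V => ¬ OuterBlock α V)) {V : Finset ℕ} (hV : V ∈ α) :
    fmin (anchor α S V) ≤ fmin V ∧ fmax V ≤ fmax (anchor α S V) := by
  rcases mem_insert.1 (anchor_spec hp hS hV).1 with h | h
  · rw [h]; exact ⟨le_rfl, le_rfl⟩
  · obtain ⟨_, h1, h2⟩ := mem_encl.1 h
    exact ⟨le_of_lt h1, le_of_lt h2⟩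

noncomputable def Wblk (α S : Finset (Finset ℕ)) (A : Finset ℕ) : Finset ℕ :=
  (α.filter (fun U => anchor α S U = A)).biUnion id

lemma mem_Wblk {α S : Finset (Finset ℕ)} {A : Finset ℕ} {x : ℕ} :
    x ∈ Wblk α S A ↔ ∃ U ∈ α, anchor α S U = A ∧ x ∈ U := by
  unfold Wblk
  rw [Finset.mem_biUnion]
  constructor
  · rintro ⟨U, hU, hx⟩
    obtain ⟨h1, h2⟩ := mem_filter.1 hU
    exact ⟨U, h1, h2, hx⟩
  · rintro ⟨U, h1, h2, hx⟩
    exact ⟨U, mem_filter.2 ⟨h1, h2⟩, hx⟩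

lemma subset_Wblk {α S : Finset (Finset ℕ)} {V : Finset ℕ} (hV : V ∈ α) :
    V ⊆ Wblk α S (anchor α S V) :=
  fun _ hx => mem_Wblk.2 ⟨V, hV, rfl, hx⟩

lemma Wblk_bounds {F : Finset ℕ} {α S : Finset (Finset ℕ)} (hp : IsPartitionOfSet F α)
    (hS : S ⊆ α.filter (fun V => ¬ OuterBlock α V)) {A : Finset ℕ} {x : ℕ}
    (hx : x ∈ Wblk α S A) : fmin A ≤ x ∧ x ≤ fmax A := by
  obtain ⟨U, hU, hanc, hxU⟩ := mem_Wblk.1 hx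
  obtain ⟨h1, h2⟩ := anchor_interval hp hS hU
  rw [hanc] at h1 h2
  exact ⟨le_trans h1 (fmin_le hxU), le_trans (le_fmax hxU) h2⟩

lemma Wblk_minmax {F : Finset ℕ} {α S : Finset (Finset ℕ)} (hp : IsPartitionOfSet F α)
    (hS : S ⊆ α.filter (fun V => ¬ OuterBlock α V)) {A : Finset ℕ} (hA : A ∈ α)
    (hfix : anchor α S A = A) :
    fmin (Wblk α S A) = fmin A ∧ fmax (Wblk α S A) = fmax A := by
  have hsub : A ⊆ Wblk α S A := fun x hx => mem_Wblk.2 ⟨A, hA, hfix, hx⟩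
  have hAne : A.Nonempty := hp.1 A hA
  have hne : (Wblk α S A).Nonempty := by
    obtain ⟨y, hy⟩ := hAne
    exact ⟨y, hsub hy⟩
  constructor
  · exact le_antisymm (fmin_le (hsub (fmin_mem hAne))) ((Wblk_bounds hp hS (fmin_mem hne)).1)
  · exact le_antisymm ((Wblk_bounds hp hS (fmax_mem hne)).2) (le_fmax (hsub (fmax_mem hAne)))

lemma keyL {F : Finset ℕ} {α S : Finset (Finset ℕ)} (hp : IsPartitionOfSet F α)
    (hnc : ¬ IsCrossing α) (hS : S ⊆ α.filter (fun V => ¬ OuterBlock α V))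
    {U A' : Finset ℕ} {x : ℕ} (hU : U ∈ α) (hxU : x ∈ U) (hA' : A' ∈ α)
    (hfixA' : anchor α S A' = A') (hne : anchor α S U ≠ A')
    (hlt : fmin (anchor α S U) < fmin A') (h1 : fmin A' < x) (h2 : x < fmax A') : False := by
  have hUA' : U ≠ A' := fun h => hne (by rw [h, hfixA'])
  rcases trichotomy hp hnc hU hA' hUA' with hcase | hcase | hcase
  · have ha := hcase (fmin A') (fmin_mem (hp.1 A' hA'))
    exact hnc (cross_intro hU hA' hUA' (fmin_mem (hp.1 U hU)) (fmin_mem (hp.1 A' hA'))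
      hxU (fmax_mem (hp.1 A' hA')) ha.1 h1 h2)
  · have hminU := hcase (fmin U) (fmin_mem (hp.1 U hU))
    have hmaxU := hcase (fmax U) (fmax_mem (hp.1 U hU))
    have hA'encl : A' ∈ encl α U := mem_encl.2 ⟨hA', hminU.1, hmaxU.2⟩
    have hA'S : A' ∉ S := by
      intro h
      have hans := (anchor_spec hp hS hA').2.1
      rw [hfixA'] at hans
      exact hans h
    have := (anchor_spec hp hS hU).2.2 A' (mem_insert_of_mem hA'encl) hA'S
    omega
  · have hmU := fmin_le hxU
    have hMU := le_fmax hxU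
    rcases hcase with h | h <;> omega

end St12
namespace St12
open Finset

lemma Wblk_noncross {F : Finset ℕ} {α S : Finset (Finset ℕ)} (hp : IsPartitionOfSet F α)
    (hnc : ¬ IsCrossing α) (hS : S ⊆ α.filter (fun V => ¬ OuterBlock α V)) :
    ¬ IsCrossing (α.image (fun V => Wblk α S (anchor α S V))) := by
  rintro ⟨W1, hW1, W2, hW2, hne', a, ha, b, hb, c, hc, d, hd, h1, h2, h3⟩
  obtain ⟨V1, hV1, rfl⟩ := mem_image.1 hW1
  obtain ⟨V2, hV2, rfl⟩ := mem_image.1 hW2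
  have hAα : anchor α S V1 ∈ α := anchor_mem hp hS hV1
  have hA'α : anchor α S V2 ∈ α := anchor_mem hp hS hV2
  have hfixA : anchor α S (anchor α S V1) = anchor α S V1 :=
    anchor_fix hp hS hAα (anchor_spec hp hS hV1).2.1
  have hfixA' : anchor α S (anchor α S V2) = anchor α S V2 :=
    anchor_fix hp hS hA'α (anchor_spec hp hS hV2).2.1
  have hAA' : anchor α S V1 ≠ anchor α S V2 := fun h => hne' (by rw [h])
  have hba := Wblk_bounds hp hS ha
  have hbb := Wblk_bounds hp hS hb
  have hbc := Wblk_bounds hp hS hc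
  have hbd := Wblk_bounds hp hS hd
  rcases trichotomy hp hnc hAα hA'α hAA' with hcase | hcase | hcase
  · -- A' strictly inside A's span
    have hfm := hcase (fmin (anchor α S V2)) (fmin_mem (hp.1 _ hA'α))
    obtain ⟨U, hU, hancU, hcU⟩ := mem_Wblk.1 hc
    exact keyL hp hnc hS hU hcU hA'α hfixA' (by rw [hancU]; exact hAA')
      (by rw [hancU]; exact hfm.1) (by omega) (by omega)
  · -- A strictly inside A's span
    have hfm := hcase (fmin (anchor α S V1)) (fmin_mem (hp.1 _ hAα))
    obtain ⟨U, hU, hancU, hbU⟩ := mem_Wblk.1 hb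
    exact keyL hp hnc hS hU hbU hAα hfixA (by rw [hancU]; exact Ne.symm hAA')
      (by rw [hancU]; exact hfm.1) (by omega) (by omega)
  · rcases hcase with h | h <;> omega

lemma Wblk_part {F : Finset ℕ} {α S : Finset (Finset ℕ)} (hp : IsPartitionOfSet F α)
    (hS : S ⊆ α.filter (fun V => ¬ OuterBlock α V)) :
    IsPartitionOfSet F (α.image (fun V => Wblk α S (anchor α S V))) := by
  refine ⟨?_, ?_, ?_, ?_⟩
  · intro W hW
    obtain ⟨V, hV, rfl⟩ := mem_image.1 hW
    obtain ⟨y, hy⟩ := hp.1 V hV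
    exact ⟨y, subset_Wblk hV hy⟩
  · intro W hW
    obtain ⟨V, hV, rfl⟩ := mem_image.1 hW
    intro x hx
    obtain ⟨U, hU, _, hxU⟩ := mem_Wblk.1 hx
    exact hp.2.1 U hU hxU
  · intro m hm
    obtain ⟨V, hV, hmV⟩ := hp.2.2.1 m hm
    exact ⟨_, mem_image_of_mem _ hV, subset_Wblk hV hmV⟩
  · intro W hW W' hW' hne'
    obtain ⟨V, hV, rfl⟩ := mem_image.1 hW
    obtain ⟨V', hV', rfl⟩ := mem_image.1 hW'
    apply eq_empty_of_forall_notMem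
    intro x hx
    obtain ⟨hx1, hx2⟩ := mem_inter.1 hx
    obtain ⟨U, hU, he, hxU⟩ := mem_Wblk.1 hx1
    obtain ⟨U', hU', he', hxU'⟩ := mem_Wblk.1 hx2
    have hUU : U = U' := part_eq_of_mem hp hU hU' hxU hxU'
    subst hUU
    exact hne' (by rw [← he, ← he'])

lemma Wblk_LL {F : Finset ℕ} {α S : Finset (Finset ℕ)} (hp : IsPartitionOfSet F α)
    (hS : S ⊆ α.filter (fun V => ¬ OuterBlock α V)) :
    LL α (α.image (fun V => Wblk α S (anchor α S V))) := by
  constructor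
  · intro V hV
    exact ⟨_, mem_image_of_mem _ hV, subset_Wblk hV⟩
  · intro W hW
    obtain ⟨V, hV, rfl⟩ := mem_image.1 hW
    have hAα := anchor_mem hp hS hV
    have hfix := anchor_fix hp hS hAα (anchor_spec hp hS hV).2.1
    obtain ⟨hmin, hmax⟩ := Wblk_minmax hp hS hAα hfix
    exact ⟨anchor α S V, hAα, by rw [hmin]; exact fmin_mem (hp.1 _ hAα),
      by rw [hmax]; exact fmax_mem (hp.1 _ hAα)⟩

lemma Sof_Wblk {F : Finset ℕ} {α S : Finset (Finset ℕ)} (hp : IsPartitionOfSet F α)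
    (hS : S ⊆ α.filter (fun V => ¬ OuterBlock α V)) :
    α.filter (fun V => ∃ W ∈ α.image (fun V => Wblk α S (anchor α S V)), V ⊆ W ∧ fmin W ∉ V)
      = S := by
  ext V
  rw [mem_filter]
  constructor
  · rintro ⟨hVα, W, hW, hVW, hminW⟩
    have hWeq : W = Wblk α S (anchor α S V) := by
      obtain ⟨V1, hV1, rfl⟩ := mem_image.1 hW
      obtain ⟨y, hy⟩ := hp.1 V hVα
      obtain ⟨U, hU, he, hyU⟩ := mem_Wblk.1 (hVW hy)
      have hUV : U = V := part_eq_of_mem hp hU hVα hyU hy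
      subst hUV
      rw [← he]
    subst hWeq
    by_contra hVS
    have hfix := anchor_fix hp hS hVα hVS
    rw [hfix] at hminW
    rw [(Wblk_minmax hp hS hVα hfix).1] at hminW
    exact hminW (fmin_mem (hp.1 V hVα))
  · intro hVS
    have hVα : V ∈ α := (mem_filter.1 (hS hVS)).1
    refine ⟨hVα, Wblk α S (anchor α S V), mem_image_of_mem _ hVα, subset_Wblk hVα, ?_⟩
    have hanc_ne : anchor α S V ≠ V := by
      intro h
      exact (anchor_spec hp hS hVα).2.1 (by rw [h]; exact hVS)
    have hencl : anchor α S V ∈ encl α V := by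
      rcases mem_insert.1 (anchor_spec hp hS hVα).1 with h | h
      · exact absurd h hanc_ne
      · exact h
    have hlt : fmin (anchor α S V) < fmin V := (mem_encl.1 hencl).2.1
    have hfixA := anchor_fix hp hS (anchor_mem hp hS hVα) (anchor_spec hp hS hVα).2.1
    rw [(Wblk_minmax hp hS (anchor_mem hp hS hVα) hfixA).1]
    intro hmem
    have := fmin_le hmem
    omega

lemma Sof_inner {F : Finset ℕ} {α β : Finset (Finset ℕ)} (hp : IsPartitionOfSet F α)
    (hβp : IsPartitionOfSet F β) (hLL : LL α β) :
    α.filter (fun V => ∃ W ∈ β, V ⊆ W ∧ fmin W ∉ V)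
      ⊆ α.filter (fun V => ¬ OuterBlock α V) := by
  intro V hV
  obtain ⟨hVα, W, hW, hVW, hminW⟩ := mem_filter.1 hV
  obtain ⟨V0, hV0α, hm0, hM0⟩ := hLL.2 W hW
  have hWne : W.Nonempty := hβp.1 W hW
  obtain ⟨W', hW', hV0W'⟩ := hLL.1 V0 hV0α
  have hWW' : W' = W := part_eq_of_mem hβp hW' hW (hV0W' hm0) (fmin_mem hWne)
  rw [hWW'] at hV0W'
  have hVne : V.Nonempty := hp.1 V hVα
  have hV0V : V0 ≠ V := fun h => hminW (h ▸ hm0)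
  have hminlt : fmin V0 < fmin V := by
    have e1 : fmin V0 ≤ fmin W := fmin_le hm0
    have e2 : fmin W ≤ fmin V := fmin_le (hVW (fmin_mem hVne))
    have e3 : fmin W ≠ fmin V := by
      intro h
      exact hminW (by rw [h]; exact fmin_mem hVne)
    omega
  have hmaxlt : fmax V < fmax V0 := by
    have e1 : fmax V ≤ fmax W := le_fmax (hVW (fmax_mem hVne))
    have e2 : fmax W ≤ fmax V0 := le_fmax hM0
    rcases lt_or_eq_of_le e1 with h | h
    · omega
    · exfalso
      apply hV0V
      apply part_eq_of_mem hp hV0α hVα hM0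
      rw [← h]
      exact fmax_mem hVne
  rw [mem_filter]
  exact ⟨hVα, not_outer_iff.2 ⟨V0, mem_encl.2 ⟨hV0α, hminlt, hmaxlt⟩⟩⟩

lemma anchor_of_LL {F : Finset ℕ} {α β : Finset (Finset ℕ)}
    (hp : IsPartitionOfSet F α) (hnc : ¬IsCrossing α)
    (hβp : IsPartitionOfSet F β) (hβnc : ¬IsCrossing β) (hLL : LL α β)
    {V : Finset ℕ} (hV : V ∈ α) :
    anchor α (α.filter (fun U => ∃ W ∈ β, U ⊆ W ∧ fmin W ∉ U)) V
      = blockOf α (fmin (blockOf β (fmin V))) := by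
  set S := α.filter (fun U => ∃ W ∈ β, U ⊆ W ∧ fmin W ∉ U) with hSdef
  have hS : S ⊆ α.filter (fun U => ¬ OuterBlock α U) := Sof_inner hp hβp hLL
  have hVne : V.Nonempty := hp.1 V hV
  obtain ⟨W, hWβ, hVW⟩ := hLL.1 V hV
  have hWV : blockOf β (fmin V) = W := blockOf_eq hβp hWβ (hVW (fmin_mem hVne))
  rw [hWV]
  have hWne : W.Nonempty := hβp.1 W hWβ
  obtain ⟨V0, hV0α, hm0, hM0⟩ := hLL.2 W hWβ
  have hV0e : blockOf α (fmin W) = V0 := blockOf_eq hp hV0α hm0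
  rw [hV0e]
  have hV0ne : V0.Nonempty := hp.1 V0 hV0α
  obtain ⟨W', hW', hV0W'⟩ := hLL.1 V0 hV0α
  have hWW' : W' = W := part_eq_of_mem hβp hW' hWβ (hV0W' hm0) (fmin_mem hWne)
  rw [hWW'] at hV0W'
  have hminV0 : fmin V0 = fmin W :=
    le_antisymm (fmin_le hm0) (fmin_le (hV0W' (fmin_mem hV0ne)))
  have hV0S : V0 ∉ S := by
    rw [hSdef, mem_filter]
    rintro ⟨-, W2, hW2, hsub2, hnot2⟩
    have : W2 = W := part_eq_of_mem hβp hW2 hWβ (hsub2 hm0) (fmin_mem hWne)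
    subst this
    exact hnot2 hm0
  have hV0mem : V0 ∈ insert V (encl α V) := by
    by_cases hfmW : fmin W ∈ V
    · have hVV0 : V = V0 := part_eq_of_mem hp hV hV0α hfmW hm0
      rw [← hVV0]; exact mem_insert_self _ _
    · apply mem_insert_of_mem
      apply mem_encl.2
      have e2 : fmin W ≤ fmin V := fmin_le (hVW (fmin_mem hVne))
      have e2' : fmin W ≠ fmin V := fun h => hfmW (by rw [h]; exact fmin_mem hVne)
      have e3 : fmax V ≤ fmax W := le_fmax (hVW (fmax_mem hVne))
      have hmaxV0 : fmax V0 = fmax W :=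
        le_antisymm (le_fmax (hV0W' (fmax_mem hV0ne))) (le_fmax hM0)
      have e3' : fmax V ≠ fmax W := by
        intro h
        have hMV : fmax W ∈ V := by rw [← h]; exact fmax_mem hVne
        have hVV0 : V = V0 := part_eq_of_mem hp hV hV0α hMV hM0
        exact hfmW (hVV0 ▸ hm0)
      exact ⟨hV0α, by omega, by omega⟩
  have hmax0 : ∀ B ∈ insert V (encl α V), B ∉ S → fmin B ≤ fmin V0 := by
    intro B hB hBS
    by_contra hgt
    push_neg at hgt
    have hBα : B ∈ α := by
      rcases mem_insert.1 hB with rfl | h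
      · exact hV
      · exact (mem_encl.1 h).1
    have hBne : B.Nonempty := hp.1 B hBα
    obtain ⟨W', hW'β, hBW'⟩ := hLL.1 B hBα
    have hfW'B : fmin W' ∈ B := by
      by_contra hno
      apply hBS
      rw [hSdef, mem_filter]
      exact ⟨hBα, W', hW'β, hBW', hno⟩
    rcases mem_insert.1 hB with rfl | hBe
    · have hWeq : W' = W := part_eq_of_mem hβp hW'β hWβ (hBW' (fmin_mem hBne)) (hVW (fmin_mem hBne))
      subst hWeq
      have hBV0 : B = V0 := part_eq_of_mem hp hBα hV0α hfW'B hm0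
      rw [hBV0] at hgt
      exact absurd hgt (lt_irrefl _)
    · obtain ⟨-, hBm, hBM⟩ := mem_encl.1 hBe
      have hfminW' : fmin W' = fmin B :=
        le_antisymm (fmin_le (hBW' (fmin_mem hBne))) (fmin_le hfW'B)
      have hWne' : W ≠ W' := by
        intro h
        rw [← h] at hfminW'
        omega
      have hVmM : fmin V ≤ fmax V := le_fmax (fmin_mem hVne)
      exact hβnc (cross_intro hWβ hW'β hWne' (fmin_mem hWne)
        (hBW' (fmin_mem hBne)) (hVW (fmin_mem hVne)) (hBW' (fmax_mem hBne))
        (by omega) hBm (by omega))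
  obtain ⟨hAmem, hAS, hAmax⟩ := anchor_spec hp hS hV
  have h1 : fmin (anchor α S V) ≤ fmin V0 := hmax0 _ hAmem hAS
  have h2 : fmin V0 ≤ fmin (anchor α S V) := hAmax V0 hV0mem hV0S
  have hAα : anchor α S V ∈ α := anchor_mem hp hS hV
  refine part_eq_of_mem hp hAα hV0α (fmin_mem (hp.1 _ hAα)) ?_
  have heq2 : fmin (anchor α S V) = fmin V0 := le_antisymm h1 h2
  rw [heq2]
  exact fmin_mem hV0ne

lemma βof_eq {F : Finset ℕ} {α β : Finset (Finset ℕ)}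
    (hp : IsPartitionOfSet F α) (hnc : ¬IsCrossing α)
    (hβ : β ∈ NCSet F) (hLL : LL α β) :
    α.image (fun V => Wblk α (α.filter (fun U => ∃ W ∈ β, U ⊆ W ∧ fmin W ∉ U))
      (anchor α (α.filter (fun U => ∃ W ∈ β, U ⊆ W ∧ fmin W ∉ U)) V)) = β := by
  obtain ⟨hβp, hβnc⟩ := mem_NCSet.1 hβ
  set S := α.filter (fun U => ∃ W ∈ β, U ⊆ W ∧ fmin W ∉ U) with hSdef
  have hanc : ∀ V ∈ α, anchor α S V = blockOf α (fmin (blockOf β (fmin V))) :=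
    fun V hV => anchor_of_LL hp hnc hβp hβnc hLL hV
  -- each α-block lies in its β-block
  have hWV : ∀ V ∈ α, blockOf β (fmin V) ∈ β ∧ V ⊆ blockOf β (fmin V) := by
    intro V hV
    obtain ⟨W, hW, hsub⟩ := hLL.1 V hV
    rw [blockOf_eq hβp hW (hsub (fmin_mem (hp.1 V hV)))]
    exact ⟨hW, hsub⟩
  -- spanning block of each β-block
  have hspan : ∀ W ∈ β, blockOf α (fmin W) ∈ α ∧ fmin W ∈ blockOf α (fmin W) ∧
      blockOf α (fmin W) ⊆ W := by
    intro W hW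
    obtain ⟨V0, hV0α, hm0, hM0⟩ := hLL.2 W hW
    rw [blockOf_eq hp hV0α hm0]
    refine ⟨hV0α, hm0, ?_⟩
    obtain ⟨W', hW', hsub⟩ := hLL.1 V0 hV0α
    have e : W' = W := part_eq_of_mem hβp hW' hW (hsub hm0) (fmin_mem (hβp.1 W hW))
    exact e ▸ hsub
  -- Wblk (anchor V) is the β-block of V
  have hmain : ∀ V ∈ α, Wblk α S (anchor α S V) = blockOf β (fmin V) := by
    intro V hV
    ext x
    constructor
    · intro hx
      obtain ⟨U, hU, hancU, hxU⟩ := mem_Wblk.1 hx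
      rw [hanc U hU] at hancU
      rw [hanc V hV] at hancU
      -- spanning blocks equal ⇒ β-blocks equal
      obtain ⟨hWUβ, hUWU⟩ := hWV U hU
      obtain ⟨hWVβ, hVWV⟩ := hWV V hV
      obtain ⟨hsUα, hsUm, hsUsub⟩ := hspan _ hWUβ
      obtain ⟨hsVα, hsVm, hsVsub⟩ := hspan _ hWVβ
      have hWeq : blockOf β (fmin U) = blockOf β (fmin V) := by
        apply part_eq_of_mem hβp hWUβ hWVβ (hsUsub hsUm)
        rw [hancU] at hsUm
        exact hsVsub hsUm
      rw [← hWeq]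
      exact hUWU hxU
    · intro hx
      obtain ⟨hWVβ, hVWV⟩ := hWV V hV
      have hxF : x ∈ F := hβp.2.1 _ hWVβ hx
      obtain ⟨U, hU, hxU⟩ := hp.2.2.1 x hxF
      obtain ⟨hWUβ, hUWU⟩ := hWV U hU
      have hWeq : blockOf β (fmin U) = blockOf β (fmin V) :=
        part_eq_of_mem hβp hWUβ hWVβ (hUWU hxU) hx
      apply mem_Wblk.2
      refine ⟨U, hU, ?_, hxU⟩
      rw [hanc U hU, hanc V hV, hWeq]
  ext W
  constructor
  · intro hW
    obtain ⟨V, hV, rfl⟩ := mem_image.1 hW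
    rw [hmain V hV]
    exact (hWV V hV).1
  · intro hW
    obtain ⟨x, hx⟩ := hβp.1 W hW
    have hxF : x ∈ F := hβp.2.1 W hW hx
    obtain ⟨U, hU, hxU⟩ := hp.2.2.1 x hxF
    obtain ⟨hWUβ, hUWU⟩ := hWV U hU
    have hWeq : blockOf β (fmin U) = W := part_eq_of_mem hβp hWUβ hW (hUWU hxU) hx
    rw [mem_image]
    exact ⟨U, hU, by rw [hmain U hU, hWeq]⟩

lemma claimA {n : ℕ} {α : Finset (Finset ℕ)} (hα : α ∈ NCSet (Finset.Icc 1 n)) :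
    ((NCSet (Finset.Icc 1 n)).filter (fun b => LL α b)).card
      = 2 ^ (α.filter (fun V => ¬ OuterBlock α V)).card := by
  obtain ⟨hp, hnc⟩ := mem_NCSet.1 hα
  rw [← Finset.card_powerset]
  apply Finset.card_bij (fun b _ => α.filter (fun V => ∃ W ∈ b, V ⊆ W ∧ fmin W ∉ V))
  · intro b hb
    rw [mem_filter] at hb
    obtain ⟨hbNC, hbLL⟩ := hb
    obtain ⟨hbp, hbnc⟩ := mem_NCSet.1 hbNC
    exact mem_powerset.2 (Sof_inner hp hbp hbLL)
  · intro b₁ h₁ b₂ h₂ heq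
    rw [mem_filter] at h₁ h₂
    have e₁ := βof_eq hp hnc h₁.1 h₁.2
    have e₂ := βof_eq hp hnc h₂.1 h₂.2
    rw [← e₁, ← e₂, heq]
  · intro S hS'
    have hS : S ⊆ α.filter (fun V => ¬ OuterBlock α V) := mem_powerset.1 hS'
    refine ⟨α.image (fun V => Wblk α S (anchor α S V)), ?_, ?_⟩
    · rw [mem_filter]
      exact ⟨mem_NCSet.2 ⟨Wblk_part hp hS, Wblk_noncross hp hnc hS⟩, Wblk_LL hp hS⟩
    · exact Sof_Wblk hp hS
end St12
namespace St12
open Finset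

lemma fiber_fst (n : ℕ) :
    ((NCF n ×ˢ NCF n).filter (fun p => LL p.1 p.2)).card
      = ∑ a ∈ NCF n, ((NCF n).filter (fun b => LL a b)).card := by
  rw [Finset.card_eq_sum_card_fiberwise
    (f := Prod.fst) (t := NCF n)
    (fun p hp => (mem_product.1 (mem_filter.1 hp).1).1)]
  apply Finset.sum_congr rfl
  intro a ha
  apply Finset.card_bij (fun p _ => p.2)
  · intro p hp
    rw [mem_filter] at hp
    obtain ⟨hp1, hp2⟩ := hp
    rw [mem_filter] at hp1
    obtain ⟨hprod, hLL⟩ := hp1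
    rw [mem_filter]
    refine ⟨(mem_product.1 hprod).2, ?_⟩
    rw [← hp2]
    exact hLL
  · intro p hp q hq heq
    rw [mem_filter] at hp hq
    exact Prod.ext (hp.2.trans hq.2.symm) heq
  · intro b hb
    rw [mem_filter] at hb
    exact ⟨(a, b), mem_filter.2 ⟨mem_filter.2 ⟨mem_product.2 ⟨ha, hb.1⟩, hb.2⟩, rfl⟩, rfl⟩

lemma fiber_snd (n : ℕ) :
    ((NCF n ×ˢ NCF n).filter (fun p => LL p.1 p.2)).card
      = ∑ b ∈ NCF n, ((NCF n).filter (fun a => LL a b)).card := by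
  rw [Finset.card_eq_sum_card_fiberwise
    (f := Prod.snd) (t := NCF n)
    (fun p hp => (mem_product.1 (mem_filter.1 hp).1).2)]
  apply Finset.sum_congr rfl
  intro b hb
  apply Finset.card_bij (fun p _ => p.1)
  · intro p hp
    rw [mem_filter] at hp
    obtain ⟨hp1, hp2⟩ := hp
    rw [mem_filter] at hp1
    obtain ⟨hprod, hLL⟩ := hp1
    rw [mem_filter]
    refine ⟨(mem_product.1 hprod).1, ?_⟩
    rw [← hp2]
    exact hLL
  · intro p hp q hq heq
    rw [mem_filter] at hp hq
    exact Prod.ext heq (hp.2.trans hq.2.symm)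
  · intro a ha
    rw [mem_filter] at ha
    exact ⟨(a, b), mem_filter.2 ⟨mem_filter.2 ⟨mem_product.2 ⟨ha.1, hb⟩, ha.2⟩, rfl⟩, rfl⟩

end St12

open St12

/-- For every positive integer `n`, the cardinality of
`{(α, β) : α, β ∈ NC(n), α ≪ β}` equals `Σ_{α ∈ NC(n)} 2^{i(α)}` where `i(α)` is the
number of inner blocks of `α`; consequently
`Σ_{α ∈ NC(n)} 2^{i(α)} = Σ_{β ∈ NC(n)} ∏_{W block of β} Cat_{|W| - 1}`. -/
theorem stmt12 (n : ℕ) (hn : 0 < n) :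
    {p : Finset (Finset ℕ) × Finset (Finset ℕ) |
        IsNCPartition n p.1 ∧ IsNCPartition n p.2 ∧ LL p.1 p.2}.ncard
      = ∑ α ∈ NCF n, 2 ^ (α.filter fun V => ¬ OuterBlock α V).card ∧
    ∑ α ∈ NCF n, 2 ^ (α.filter fun V => ¬ OuterBlock α V).card
      = ∑ β ∈ NCF n, ∏ W ∈ β, catalan (W.card - 1) := by
  have hset : {p : Finset (Finset ℕ) × Finset (Finset ℕ) |
      IsNCPartition n p.1 ∧ IsNCPartition n p.2 ∧ LL p.1 p.2}
      = ↑((NCF n ×ˢ NCF n).filter (fun p => LL p.1 p.2)) := by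
    ext p
    rw [Set.mem_setOf_eq, Finset.mem_coe, Finset.mem_filter, Finset.mem_product]
    constructor
    · rintro ⟨h1, h2, h3⟩
      refine ⟨⟨?_, ?_⟩, h3⟩
      · rw [NCF_eq]; exact mem_NCSet.2 ⟨h1.1, h1.2⟩
      · rw [NCF_eq]; exact mem_NCSet.2 ⟨h2.1, h2.2⟩
    · rintro ⟨⟨h1, h2⟩, h3⟩
      rw [NCF_eq] at h1 h2
      obtain ⟨h1a, h1b⟩ := mem_NCSet.1 h1
      obtain ⟨h2a, h2b⟩ := mem_NCSet.1 h2
      exact ⟨⟨h1a, h1b⟩, ⟨h2a, h2b⟩, h3⟩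
  have hA : ∀ a ∈ NCF n, ((NCF n).filter (fun b => LL a b)).card
      = 2 ^ (a.filter fun V => ¬ OuterBlock a V).card := by
    intro a ha
    rw [NCF_eq] at ha ⊢
    exact claimA ha
  have hB : ∀ b ∈ NCF n, ((NCF n).filter (fun a => LL a b)).card
      = ∏ W ∈ b, catalan (W.card - 1) := by
    intro b hb
    rw [NCF_eq] at hb ⊢
    exact claimB hb
  constructor
  · rw [hset, Set.ncard_coe_finset, fiber_fst n]
    exact Finset.sum_congr rfl hA
  · calc ∑ α ∈ NCF n, 2 ^ (α.filter fun V => ¬ OuterBlock α V).card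
        = ∑ a ∈ NCF n, ((NCF n).filter (fun b => LL a b)).card :=
          (Finset.sum_congr rfl hA).symm
      _ = ((NCF n ×ˢ NCF n).filter (fun p => LL p.1 p.2)).card := (fiber_fst n).symm
      _ = ∑ b ∈ NCF n, ((NCF n).filter (fun a => LL a b)).card := fiber_snd n
      _ = ∑ β ∈ NCF n, ∏ W ∈ β, catalan (W.card - 1) := Finset.sum_congr rfl hB
end
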